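/- arXiv:1308.4081 — 5 statements merged into one kernel-verified Lean document; each statement's English description precedes it below -/
import Mathlib

section
/- For any positive integer m and any Ferrers board B, the board l(B) = (l_t, l_{t−1}, ..., l_1), where l_i is the number of cells of B in level i and t is the largest index with l_t ≠ 0, is a weakly increasing sequence (i.e., a Ferrers board), is a singleton board, and is m-level rook equivalent to B (r_{k,m}(B) = r_{k,m}(l(B)) for all k). -/
/-- `(i, j)` (row `i`, column `j`, both 1-indexed) is a cell of the Ferrers board
with column heights `b 1, …, b n`. -/
def IsCell (b : ℕ → ℕ) (n : ℕ) (c : ℕ × ℕ) : Prop :=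
  1 ≤ c.2 ∧ c.2 ≤ n ∧ 1 ≤ c.1 ∧ c.1 ≤ b c.2

/-- An `m`-level rook placement: no two rooks in the same column or level. -/
def IsMLevelPlacement (m : ℕ) (b : ℕ → ℕ) (n : ℕ) (P : Finset (ℕ × ℕ)) : Prop :=
  (∀ c ∈ P, IsCell b n c) ∧
  (∀ c ∈ P, ∀ c' ∈ P, c.2 = c'.2 → c = c') ∧
  (∀ c ∈ P, ∀ c' ∈ P, (c.1 - 1) / m = (c'.1 - 1) / m → c = c')

/-- `r_{k,m}(B)`: the number of `m`-level rook placements with `k` rooks. -/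
noncomputable def rkm (m : ℕ) (b : ℕ → ℕ) (n k : ℕ) : ℕ :=
  Nat.card {P : Finset (ℕ × ℕ) // IsMLevelPlacement m b n P ∧ P.card = k}

/-- A singleton board: if `b j` is not a multiple of `m` (and `j < n`) then
`⌊b_{j+1}⌋_m > ⌊b_j⌋_m`. -/
def IsSingletonBoard (m : ℕ) (b : ℕ → ℕ) (n : ℕ) : Prop :=
  ∀ j, 1 ≤ j → j < n → ¬ (m ∣ b j) → m * (b j / m) < m * (b (j + 1) / m)

/-- `l_i`: the number of cells of the board in level `i` (rows `(i−1)m+1, …, im`). -/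
def lvlCount (m : ℕ) (b : ℕ → ℕ) (n i : ℕ) : ℕ :=
  ∑ j ∈ Finset.Icc 1 n, (min (b j) (i * m) - min (b j) ((i - 1) * m))


/-- contribution of a column of height `w` to level `i`. -/
def ctb (m w i : ℕ) : ℕ := min w (i*m) - min w ((i-1)*m)

lemma lvlCount_eq (m : ℕ) (b : ℕ → ℕ) (n i : ℕ) :
    (∑ j ∈ Finset.Icc 1 n, (min (b j) (i * m) - min (b j) ((i - 1) * m)))
      = ∑ j ∈ Finset.Icc 1 n, ctb m (b j) i := rfl

lemma ctb_le_m (m w i : ℕ) (hi : 1 ≤ i) : ctb m w i ≤ m := by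
  unfold ctb
  have h : (i-1)*m + m = i*m := by
    have : i - 1 + 1 = i := by omega
    calc (i-1)*m + m = ((i-1)+1)*m := by ring
    _ = i*m := by rw [this]
  rcases le_total w ((i-1)*m) with h1 | h1
  · simp [min_eq_left h1]
  · rcases le_total w (i*m) with h2 | h2 <;> omega

lemma ctb_le_w (m w i : ℕ) : ctb m w i ≤ w := by
  unfold ctb; omega

lemma ctb_eq_m (m w i : ℕ) (hi : 1 ≤ i) (hw : i*m ≤ w) : ctb m w i = m := by
  unfold ctb
  have h1 : (i-1)*m ≤ i * m := Nat.mul_le_mul_right m (by omega)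
  have h : (i-1)*m + m = i*m := by
    have : i - 1 + 1 = i := by omega
    calc (i-1)*m + m = ((i-1)+1)*m := by ring
    _ = i*m := by rw [this]
  rw [min_eq_right hw, min_eq_right (le_trans h1 hw)]
  omega

lemma ctb_eq_zero (m w i : ℕ) (hw : w ≤ (i-1)*m) : ctb m w i = 0 := by
  unfold ctb
  have h1 : (i-1)*m ≤ i * m := Nat.mul_le_mul_right m (by omega)
  rw [min_eq_left (le_trans hw h1), min_eq_left hw]
  omega

lemma ctb_pos_gt (m w i : ℕ) (h : ctb m w i ≠ 0) : (i-1)*m < w := by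
  by_contra h'
  exact h (ctb_eq_zero m w i (by omega))

lemma ctb_anti (m w : ℕ) (i i' : ℕ) (hi : 1 ≤ i) (hii : i ≤ i') :
    ctb m w i' ≤ ctb m w i := by
  rcases Nat.eq_or_lt_of_le hii with rfl | hlt
  · exact le_rfl
  · by_cases h : ctb m w i' = 0
    · simp [h]
    · have hw : (i'-1)*m < w := ctb_pos_gt m w i' h
      have : i*m ≤ (i'-1)*m := Nat.mul_le_mul_right m (by omega)
      rw [ctb_eq_m m w i hi (by omega)]
      exact ctb_le_m m w i' (by omega)

/-- Level of the next cell: adding one cell on top of a column of height `w`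
adds it to level `w/m + 1`. -/
lemma ctb_succ (m w i : ℕ) (hm : 0 < m) :
    ctb m (w+1) i = ctb m w i + (if i = w/m + 1 then 1 else 0) := by
  have hdm : (w/m)*m + w%m = w := by rw [Nat.mul_comm]; exact Nat.div_add_mod w m
  have hmod := Nat.mod_lt w hm
  unfold ctb
  by_cases hi : i = w/m + 1
  · subst hi
    have h1 : (w/m + 1 - 1)*m = (w/m)*m := by congr 1
    have h2 : (w/m)*m ≤ w := Nat.div_mul_le_self w m
    have h3 : w + 1 ≤ (w/m+1)*m := by
      have : (w/m+1)*m = (w/m)*m + m := by ring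
      omega
    rw [h1, min_eq_left (by omega), min_eq_left (by omega : w ≤ (w/m+1)*m),
      min_eq_right h2, min_eq_right (by omega : (w/m)*m ≤ w + 1)]
    have h4 : (w/m+1)*m = (w/m)*m + m := by ring
    rw [if_pos rfl]
    omega
  · simp only [hi, if_false]
    rcases Nat.lt_or_ge i (w/m + 1) with hlt | hge
    · -- i ≤ w/m, so i*m ≤ w
      have h2 : i*m ≤ (w/m)*m := Nat.mul_le_mul_right m (by omega)
      have h3 : (w/m)*m ≤ w := Nat.div_mul_le_self w m
      have h1 : (i-1)*m ≤ i * m := Nat.mul_le_mul_right m (by omega)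
      rw [min_eq_right (by omega : i*m ≤ w), min_eq_right (by omega : i*m ≤ w+1),
        min_eq_right (by omega : (i-1)*m ≤ w), min_eq_right (by omega : (i-1)*m ≤ w+1)]
      omega
    · -- i ≥ w/m + 2, so (i-1)*m ≥ (w/m+1)*m ≥ w+1
      have h2 : (w/m+1)*m ≤ (i-1)*m := Nat.mul_le_mul_right m (by omega)
      have h3 : (w/m+1)*m = (w/m)*m + m := by ring
      have h4 : (w/m)*m ≤ w := Nat.div_mul_le_self w m
      have h5 : w + 1 ≤ (i-1)*m := by omega
      have h1 : (i-1)*m ≤ i * m := Nat.mul_le_mul_right m (by omega)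
      rw [min_eq_left (by omega : w ≤ i*m), min_eq_left (by omega : w+1 ≤ i*m),
        min_eq_left (by omega : w ≤ (i-1)*m), min_eq_left (by omega : w+1 ≤ (i-1)*m)]
      omega

/-! ### Level count basics -/

lemma lvlCount_def (m : ℕ) (b : ℕ → ℕ) (n i : ℕ) :
    (∑ j ∈ Finset.Icc 1 n, (min (b j) (i * m) - min (b j) ((i - 1) * m)))
      = ∑ j ∈ Finset.Icc 1 n, ctb m (b j) i := rfl

lemma lvl_anti (m : ℕ) (b : ℕ → ℕ) (n : ℕ) {i i' : ℕ} (hi : 1 ≤ i) (hii : i ≤ i') :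
    (∑ j ∈ Finset.Icc 1 n, ctb m (b j) i') ≤ ∑ j ∈ Finset.Icc 1 n, ctb m (b j) i :=
  Finset.sum_le_sum (fun j _ => ctb_anti m (b j) i i' hi hii)

lemma lvl_le_sum (m : ℕ) (b : ℕ → ℕ) (n i : ℕ) :
    (∑ j ∈ Finset.Icc 1 n, ctb m (b j) i) ≤ ∑ j ∈ Finset.Icc 1 n, b j :=
  Finset.sum_le_sum (fun j _ => ctb_le_w m (b j) i)

lemma col_le_of_lvl_zero (m : ℕ) (hm : 0 < m) (b : ℕ → ℕ) (n i : ℕ) (hi : 1 ≤ i)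
    (h : (∑ j ∈ Finset.Icc 1 n, ctb m (b j) i) = 0) :
    ∀ j ∈ Finset.Icc 1 n, b j ≤ (i-1)*m := by
  intro j hj
  by_contra hbj
  have h1 : ctb m (b j) i ≠ 0 := by
    unfold ctb
    have h2 : (i-1)*m + 1 ≤ i*m := by
      have : (i-1)*m + m = i*m := by
        have h3 : i - 1 + 1 = i := by omega
        calc (i-1)*m + m = ((i-1)+1)*m := by ring
        _ = i*m := by rw [h3]
      omega
    have h4 : min (b j) ((i-1)*m) = (i-1)*m := min_eq_right (by omega)
    have h5 : (i-1)*m + 1 ≤ min (b j) (i*m) := le_min (by omega) h2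
    omega
  exact h1 (Finset.sum_eq_zero_iff.mp h j hj)

lemma lvl_zero_of_cols (m : ℕ) (b : ℕ → ℕ) (n i T : ℕ) (hT : T < i)
    (hub : ∀ j ∈ Finset.Icc 1 n, b j ≤ T*m) :
    (∑ j ∈ Finset.Icc 1 n, ctb m (b j) i) = 0 := by
  apply Finset.sum_eq_zero
  intro j hj
  apply ctb_eq_zero
  calc b j ≤ T*m := hub j hj
  _ ≤ (i-1)*m := Nat.mul_le_mul_right m (by omega)

/-- key singleton-board step: if `m ∤ λ_i` then `λ_{i-1}` reaches the next multiple of m. -/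
lemma singleton_step (m : ℕ) (hm : 0 < m) (b : ℕ → ℕ) (n i : ℕ) (hi : 2 ≤ i)
    (hnd : ¬ m ∣ (∑ j ∈ Finset.Icc 1 n, ctb m (b j) i)) :
    m * ((∑ j ∈ Finset.Icc 1 n, ctb m (b j) i) / m) + m
      ≤ m * ((∑ j ∈ Finset.Icc 1 n, ctb m (b j) (i-1)) / m) := by
  set v := ∑ j ∈ Finset.Icc 1 n, ctb m (b j) i with hv
  set D := (Finset.Icc 1 n).filter (fun j => (i-1)*m < b j) with hD
  have hub : v ≤ m * D.card := by
    have h1 : v ≤ ∑ j ∈ Finset.Icc 1 n, (if (i-1)*m < b j then m else 0) := by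
      apply Finset.sum_le_sum
      intro j hj
      by_cases hc : (i-1)*m < b j
      · simpa [hc] using ctb_le_m m (b j) i (by omega)
      · simp [hc, ctb_eq_zero m (b j) i (by omega)]
    have h2 : (∑ j ∈ Finset.Icc 1 n, (if (i-1)*m < b j then m else 0)) = m * D.card := by
      rw [← Finset.sum_filter, ← hD, Finset.sum_const, smul_eq_mul, mul_comm]
    omega
  have hlow : m * D.card ≤ ∑ j ∈ Finset.Icc 1 n, ctb m (b j) (i-1) := by
    have h1 : ∀ j ∈ D, ctb m (b j) (i-1) = m := by
      intro j hj
      rw [hD, Finset.mem_filter] at hj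
      apply ctb_eq_m m (b j) (i-1) (by omega)
      have : (i-1-1)*m ≤ (i-1)*m := Nat.mul_le_mul_right m (by omega)
      omega
    calc m * D.card = ∑ _j ∈ D, m := by rw [Finset.sum_const, smul_eq_mul, mul_comm]
    _ = ∑ j ∈ D, ctb m (b j) (i-1) := (Finset.sum_congr rfl (fun j hj => (h1 j hj).symm))
    _ ≤ ∑ j ∈ Finset.Icc 1 n, ctb m (b j) (i-1) := by
        apply Finset.sum_le_sum_of_subset
        rw [hD]; exact Finset.filter_subset _ _
  have hne : v ≠ m * D.card := by
    intro h; exact hnd (h ▸ Dvd.intro D.card rfl)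
  have hlt : v / m < D.card := by
    rw [Nat.div_lt_iff_lt_mul hm]
    have hcomm : D.card * m = m * D.card := Nat.mul_comm _ _
    omega
  have h6 : m * (v/m) + m ≤ m * D.card := by
    calc m * (v/m) + m = m * (v/m + 1) := by ring
    _ ≤ m * D.card := Nat.mul_le_mul_left m hlt
  have h7 : D.card ≤ (∑ j ∈ Finset.Icc 1 n, ctb m (b j) (i-1)) / m := by
    rw [Nat.le_div_iff_mul_le hm, mul_comm]; exact hlow
  exact le_trans h6 (Nat.mul_le_mul_left m h7)

/-! ### rkm as a Finset card -/

def cellsF (b : ℕ → ℕ) (n R : ℕ) : Finset (ℕ × ℕ) :=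
  (Finset.Icc 1 R ×ˢ Finset.Icc 1 n).filter (fun c => c.1 ≤ b c.2)

lemma mem_cellsF {b : ℕ → ℕ} {n R : ℕ} {c : ℕ × ℕ} :
    c ∈ cellsF b n R ↔ (1 ≤ c.1 ∧ c.1 ≤ R ∧ 1 ≤ c.2 ∧ c.2 ≤ n ∧ c.1 ≤ b c.2) := by
  simp only [cellsF, Finset.mem_filter, Finset.mem_product, Finset.mem_Icc]
  tauto

lemma isCell_iff {b : ℕ → ℕ} {n R : ℕ} (hub : ∀ j, 1 ≤ j → j ≤ n → b j ≤ R) {c : ℕ × ℕ} :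
    IsCell b n c ↔ c ∈ cellsF b n R := by
  rw [mem_cellsF]
  unfold IsCell
  constructor
  · rintro ⟨h1, h2, h3, h4⟩
    exact ⟨h3, le_trans h4 (hub c.2 h1 h2), h1, h2, h4⟩
  · rintro ⟨h1, h2, h3, h4, h5⟩
    exact ⟨h3, h4, h1, h5⟩

section Counting
attribute [local instance] Classical.propDecidable

noncomputable def SP (m : ℕ) (b : ℕ → ℕ) (n k R : ℕ) : Finset (Finset (ℕ × ℕ)) :=
  (cellsF b n R).powerset.filter (fun P => IsMLevelPlacement m b n P ∧ P.card = k)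

lemma mem_SP {m : ℕ} {b : ℕ → ℕ} {n k R : ℕ} {P : Finset (ℕ × ℕ)}
    (hub : ∀ j, 1 ≤ j → j ≤ n → b j ≤ R) :
    P ∈ SP m b n k R ↔ (IsMLevelPlacement m b n P ∧ P.card = k) := by
  unfold SP
  rw [Finset.mem_filter, Finset.mem_powerset]
  constructor
  · tauto
  · intro h
    refine ⟨fun c hc => ?_, h⟩
    exact (isCell_iff hub).mp (h.1.1 c hc)

lemma rkm_eq_card {m : ℕ} {b : ℕ → ℕ} {n k R : ℕ}
    (hub : ∀ j, 1 ≤ j → j ≤ n → b j ≤ R) :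
    rkm m b n k = (SP m b n k R).card := by
  unfold rkm
  rw [Nat.card_congr (Equiv.subtypeEquivRight (fun P => (mem_SP hub (P := P)).symm))]
  rw [Nat.card_eq_fintype_card]
  exact Fintype.card_coe _

lemma empty_placement (m : ℕ) (b : ℕ → ℕ) (n : ℕ) : IsMLevelPlacement m b n ∅ := by
  refine ⟨?_, ?_, ?_⟩ <;> intro c hc <;> exact absurd hc (Finset.notMem_empty c)

lemma rkm_zero (m : ℕ) (b : ℕ → ℕ) (n : ℕ) : rkm m b n 0 = 1 := by
  unfold rkm
  have h : ∀ P : Finset (ℕ × ℕ), (IsMLevelPlacement m b n P ∧ P.card = 0) ↔ P = ∅ := by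
    intro P
    constructor
    · rintro ⟨_, h⟩; exact Finset.card_eq_zero.mp h
    · rintro rfl; exact ⟨empty_placement m b n, rfl⟩
  rw [Nat.card_congr (Equiv.subtypeEquivRight h)]
  exact Nat.card_unique

lemma rkm_eq_zero (m : ℕ) (hm : 0 < m) (b : ℕ → ℕ) (n k T : ℕ)
    (hub : ∀ j, 1 ≤ j → j ≤ n → b j ≤ T*m) (hk : T < k) :
    rkm m b n k = 0 := by
  unfold rkm
  have : IsEmpty {P : Finset (ℕ × ℕ) // IsMLevelPlacement m b n P ∧ P.card = k} := by
    constructor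
    rintro ⟨P, ⟨hcell, _, hlvl⟩, hcard⟩
    have himg : P.image (fun c => (c.1 - 1)/m) ⊆ Finset.range T := by
      intro l hl
      rw [Finset.mem_image] at hl
      obtain ⟨c, hc, rfl⟩ := hl
      obtain ⟨h1, h2, h3, h4⟩ := hcell c hc
      rw [Finset.mem_range, Nat.div_lt_iff_lt_mul hm]
      have : b c.2 ≤ T*m := hub c.2 h1 h2
      have : T * m = m * T := Nat.mul_comm _ _
      omega
    have hinj : Set.InjOn (fun c : ℕ × ℕ => (c.1 - 1)/m) P := by
      intro c hc c' hc' hcc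
      exact hlvl c hc c' hc' hcc
    have := Finset.card_image_of_injOn hinj
    have := Finset.card_le_card himg
    rw [Finset.card_range] at this
    omega
  exact Nat.card_of_isEmpty

end Counting

section Recursion
attribute [local instance] Classical.propDecidable

/-- the column swap on cells -/
def csw (a b : ℕ) (d : ℕ × ℕ) : ℕ × ℕ := (d.1, Equiv.swap a b d.2)

lemma csw_inj (a b : ℕ) : Function.Injective (csw a b) := by
  intro d d' h
  unfold csw at h
  rw [Prod.mk.injEq] at h
  have h3 : d.2 = d'.2 := (Equiv.swap a b).injective h.2
  exact Prod.ext h.1 h3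

lemma csw_csw (a b : ℕ) (d : ℕ × ℕ) : csw a b (csw a b d) = d := by
  unfold csw
  simp

lemma csw_fst (a b : ℕ) (d : ℕ × ℕ) : (csw a b d).1 = d.1 := rfl

lemma image_csw_csw (a b : ℕ) (Q : Finset (ℕ × ℕ)) :
    (Q.image (csw a b)).image (csw a b) = Q := by
  rw [Finset.image_image]
  have : (csw a b ∘ csw a b) = id := funext (csw_csw a b)
  rw [this, Finset.image_id]

lemma lvl_idx (m : ℕ) (hm : 0 < m) {r N : ℕ} (h1 : (N-1)*m < r) (h2 : r ≤ N*m) :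
    (r-1)/m = N-1 := by
  rcases Nat.eq_zero_or_pos N with rfl | hN
  · exfalso
    simp only [Nat.zero_sub, Nat.zero_mul] at h1 h2
    omega
  · apply Nat.div_eq_of_lt_le
    · omega
    · have h3 : (N-1).succ * m = N * m := by congr 1; omega
      rw [h3]
      omega

lemma lvl_lt (m : ℕ) (hm : 0 < m) {r N : ℕ} (h0 : 1 ≤ r) (h1 : r ≤ (N-1)*m) :
    (r-1)/m < N-1 := by
  rw [Nat.div_lt_iff_lt_mul hm]
  have : (N-1) * m = m * (N-1) := Nat.mul_comm _ _
  omega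

lemma rkm_rec (m : ℕ) (hm : 0 < m) (b : ℕ → ℕ) (n N k : ℕ) (hn : 1 ≤ n) (hk : 1 ≤ k)
    (hmono : ∀ j j', 1 ≤ j → j ≤ j' → j' ≤ n → b j ≤ b j')
    (hub : ∀ j, 1 ≤ j → j ≤ n → b j ≤ N*m)
    (htop : (N-1)*m < b n) :
    rkm m b n k =
      rkm m (fun j => min (b j) ((N-1)*m)) n k
        + (lvlCount m b n N) * rkm m (fun j => min (b j) ((N-1)*m)) (n-1) (k-1) := by
  set R := N*m with hR
  set b' : ℕ → ℕ := fun j => min (b j) ((N-1)*m) with hb'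
  have hNm : (N-1)*m ≤ N*m := Nat.mul_le_mul_right m (by omega)
  have hub' : ∀ j, 1 ≤ j → j ≤ n → b' j ≤ R := fun j h1 h2 => le_trans (min_le_left _ _) (hub j h1 h2)
  have hub'' : ∀ j, 1 ≤ j → j ≤ n-1 → b' j ≤ R := fun j h1 h2 => hub' j h1 (by omega)
  -- the three placement-counting sets
  set A := SP m b n k R with hA
  set A0 := A.filter (fun P => ∀ c ∈ P, c.1 ≤ (N-1)*m) with hA0
  set A1 := A.filter (fun P => ¬ ∀ c ∈ P, c.1 ≤ (N-1)*m) with hA1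
  have hsplit : A0.card + A1.card = A.card := Finset.card_filter_add_card_filter_not _
  -- A0 is the placements on the truncated board
  have hA0eq : A0 = SP m b' n k R := by
    ext P
    rw [hA0, Finset.mem_filter, hA, mem_SP hub, mem_SP hub']
    constructor
    · rintro ⟨⟨⟨hcell, hcol, hlvl⟩, hcard⟩, hrow⟩
      refine ⟨⟨fun c hc => ?_, hcol, hlvl⟩, hcard⟩
      obtain ⟨h1, h2, h3, h4⟩ := hcell c hc
      exact ⟨h1, h2, h3, le_min h4 (hrow c hc)⟩
    · rintro ⟨⟨hcell, hcol, hlvl⟩, hcard⟩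
      have hrow : ∀ c ∈ P, c.1 ≤ (N-1)*m := by
        intro c hc
        exact le_trans (hcell c hc).2.2.2 (min_le_right _ _)
      refine ⟨⟨⟨fun c hc => ?_, hcol, hlvl⟩, hcard⟩, hrow⟩
      obtain ⟨h1, h2, h3, h4⟩ := hcell c hc
      exact ⟨h1, h2, h3, le_trans h4 (min_le_left _ _)⟩
  -- the level-N cells
  set Lv := (cellsF b n R).filter (fun c => (N-1)*m < c.1) with hLv
  have hLvcard : Lv.card = lvlCount m b n N := by
    rw [lvlCount]
    rw [Finset.card_eq_sum_card_fiberwise (f := fun c : ℕ × ℕ => c.2) (t := Finset.Icc 1 n)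
      (fun c hc => by
        rw [Finset.mem_coe, hLv, Finset.mem_filter, mem_cellsF] at hc
        rw [Finset.mem_coe, Finset.mem_Icc]
        exact ⟨hc.1.2.2.1, hc.1.2.2.2.1⟩)]
    apply Finset.sum_congr rfl
    intro j hj
    rw [Finset.mem_Icc] at hj
    have hfib : Lv.filter (fun c : ℕ × ℕ => c.2 = j)
        = (Finset.Icc ((N-1)*m+1) (min (b j) (N*m))).image (fun r => (r, j)) := by
      ext c
      rw [Finset.mem_filter, hLv, Finset.mem_filter, mem_cellsF, Finset.mem_image]
      constructor
      · rintro ⟨⟨⟨u1, u2, u3, u4, u5⟩, u6⟩, u7⟩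
        refine ⟨c.1, ?_, ?_⟩
        · rw [Finset.mem_Icc]
          rw [u7] at u5
          exact ⟨by omega, le_min u5 u2⟩
        · rw [← u7]
      · rintro ⟨r, hr, rfl⟩
        rw [Finset.mem_Icc] at hr
        have := hr.2
        have h5 : r ≤ b j := le_trans this (min_le_left _ _)
        have h6 : r ≤ N*m := le_trans this (min_le_right _ _)
        exact ⟨⟨⟨by omega, h6, hj.1, hj.2, h5⟩, by omega⟩, rfl⟩
    rw [hfib, Finset.card_image_of_injective _ (fun r r' h => congrArg Prod.fst h),
      Nat.card_Icc]
    rcases le_total (b j) ((N-1)*m) with h | h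
    · rw [min_eq_left (le_trans h hNm), min_eq_left h]; omega
    · rw [min_eq_right h]; omega
  -- placements with a rook in level N
  have hA1card : A1.card = Lv.card * (SP m b' (n-1) (k-1) R).card := by
    rw [← Finset.card_product]
    -- unique top cell
    have hexu : ∀ P ∈ A1, ∃! c, c ∈ P ∧ (N-1)*m < c.1 := by
      intro P hP
      rw [hA1, Finset.mem_filter, hA, mem_SP hub] at hP
      obtain ⟨⟨⟨hcell, hcol, hlvl⟩, hcard⟩, hnot⟩ := hP
      push_neg at hnot
      obtain ⟨c, hc, hcrow⟩ := hnot
      refine ⟨c, ⟨hc, by omega⟩, ?_⟩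
      rintro c' ⟨hc', hcrow'⟩
      apply hlvl c' hc' c hc
      have e1 : (c.1-1)/m = N-1 := lvl_idx m hm (by omega) (le_trans (hcell c hc).2.2.2 (hub _ (hcell c hc).1 (hcell c hc).2.1))
      have e2 : (c'.1-1)/m = N-1 := lvl_idx m hm (by omega) (le_trans (hcell c' hc').2.2.2 (hub _ (hcell c' hc').1 (hcell c' hc').2.1))
      rw [e1, e2]
    apply Finset.card_bij
      (i := fun P hP => (P.choose _ (hexu P hP),
        (P.erase (P.choose _ (hexu P hP))).image (csw (P.choose _ (hexu P hP)).2 n)))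
    -- maps into the target
    · intro P hP
      obtain ⟨hc₀P, hc₀row⟩ := P.choose_spec _ (hexu P hP)
      set c₀ := P.choose _ (hexu P hP) with hc₀
      have hPmem := hP
      rw [hA1, Finset.mem_filter, hA, mem_SP hub] at hPmem
      obtain ⟨⟨⟨hcell, hcol, hlvl⟩, hcard⟩, hnot⟩ := hPmem
      have huniq : ∀ c ∈ P, (N-1)*m < c.1 → c = c₀ :=
        fun c hc h => (hexu P hP).unique ⟨hc, h⟩ ⟨hc₀P, hc₀row⟩
      have hothers : ∀ d ∈ P, d ≠ c₀ → d.1 ≤ (N-1)*m := by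
        intro d hd hne
        by_contra h
        exact hne (huniq d hd (by omega))
      obtain ⟨hc1, hc2, hc3, hc4⟩ := hcell c₀ hc₀P
      rw [Finset.mem_product]
      constructor
      · rw [hLv, Finset.mem_filter, mem_cellsF]
        exact ⟨⟨hc3, le_trans hc4 (hub _ hc1 hc2), hc1, hc2, hc4⟩, hc₀row⟩
      · rw [mem_SP hub'']
        have hbig : (N-1)*m < b c₀.2 := by omega
        constructor
        constructor
        · -- cells
          intro e he
          rw [Finset.mem_image] at he
          obtain ⟨d, hd, rfl⟩ := he
          have hdP := Finset.mem_of_mem_erase hd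
          have hdne : d ≠ c₀ := Finset.ne_of_mem_erase hd
          have hdrow : d.1 ≤ (N-1)*m := hothers d hdP hdne
          obtain ⟨hd1, hd2, hd3, hd4⟩ := hcell d hdP
          have hdcol : d.2 ≠ c₀.2 := fun h => hdne (hcol d hdP c₀ hc₀P h)
          unfold csw IsCell
          by_cases hdn : d.2 = n
          · rw [hdn, Equiv.swap_apply_right]
            have hcn : c₀.2 ≠ n := fun h => hdcol (by omega)
            exact ⟨hc1, by omega, hd3, by simp only [hb']; exact le_min (by omega) hdrow⟩
          · rw [Equiv.swap_apply_of_ne_of_ne hdcol hdn]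
            exact ⟨hd1, by omega, hd3, by simp only [hb']; exact le_min hd4 hdrow⟩
        constructor
        · -- columns
          intro e he e' he' hee
          rw [Finset.mem_image] at he he'
          obtain ⟨d, hd, rfl⟩ := he
          obtain ⟨d', hd', rfl⟩ := he'
          have : d.2 = d'.2 := (Equiv.swap c₀.2 n).injective hee
          have : d = d' := hcol d (Finset.mem_of_mem_erase hd) d' (Finset.mem_of_mem_erase hd') this
          rw [this]
        · -- levels
          intro e he e' he' hee
          rw [Finset.mem_image] at he he'
          obtain ⟨d, hd, rfl⟩ := he
          obtain ⟨d', hd', rfl⟩ := he'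
          have : d = d' := hlvl d (Finset.mem_of_mem_erase hd) d' (Finset.mem_of_mem_erase hd') hee
          rw [this]
        · -- card
          rw [Finset.card_image_of_injective _ (csw_inj _ _), Finset.card_erase_of_mem hc₀P, hcard]
    -- injectivity
    · intro P hP P' hP' heq
      obtain ⟨hc₀P, hc₀row⟩ := P.choose_spec _ (hexu P hP)
      obtain ⟨hc₀P', hc₀row'⟩ := P'.choose_spec _ (hexu P' hP')
      have h1 : P.choose _ (hexu P hP) = P'.choose _ (hexu P' hP') := congrArg Prod.fst heq
      have h2 := congrArg Prod.snd heq
      simp only at h1 h2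
      have h3 : P.erase (P.choose _ (hexu P hP)) = P'.erase (P'.choose _ (hexu P' hP')) := by
        have := congrArg (fun S => Finset.image (csw (P.choose _ (hexu P hP)).2 n) S) h2
        rw [image_csw_csw] at this
        rw [this, h1, image_csw_csw]
      have h4 := congrArg (fun S => insert (P.choose _ (hexu P hP)) S) h3
      rw [Finset.insert_erase hc₀P, h1, Finset.insert_erase hc₀P'] at h4
      exact h4
    -- surjectivity
    · rintro ⟨c, Q⟩ hp
      rw [Finset.mem_product] at hp
      obtain ⟨hcLv, hQ⟩ := hp
      rw [hLv, Finset.mem_filter, mem_cellsF] at hcLv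
      obtain ⟨⟨u1, u2, u3, u4, u5⟩, u6⟩ := hcLv
      rw [mem_SP hub''] at hQ
      obtain ⟨⟨hQcell, hQcol, hQlvl⟩, hQcard⟩ := hQ
      dsimp only at u1 u2 u3 u4 u5 u6 hQcell hQcol hQlvl hQcard
      set Q' := Q.image (csw c.2 n) with hQ'
      have hQ'row : ∀ e ∈ Q', 1 ≤ e.1 ∧ e.1 ≤ (N-1)*m := by
        intro e he
        rw [hQ', Finset.mem_image] at he
        obtain ⟨d, hd, rfl⟩ := he
        obtain ⟨g1, g2, g3, g4⟩ := hQcell d hd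
        rw [csw_fst]
        exact ⟨g3, le_trans g4 (min_le_right _ _)⟩
      have hQ'cell : ∀ e ∈ Q', IsCell b n e ∧ e.2 ≠ c.2 := by
        intro e he
        rw [hQ', Finset.mem_image] at he
        obtain ⟨d, hd, rfl⟩ := he
        obtain ⟨g1, g2, g3, g4⟩ := hQcell d hd
        have g5 : d.1 ≤ (N-1)*m := le_trans g4 (min_le_right _ _)
        have g6 : d.1 ≤ b d.2 := le_trans g4 (min_le_left _ _)
        have hdn : d.2 ≠ n := by omega
        by_cases hdc : d.2 = c.2
        · have hcn : c.2 ≠ n := by omega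
          have hsw : csw c.2 n d = (d.1, n) := by
            unfold csw; rw [hdc, Equiv.swap_apply_left]
          rw [hsw]
          have hbc : b c.2 ≤ b n := hmono c.2 n u3 u4 le_rfl
          refine ⟨⟨hn, le_rfl, g3, ?_⟩, fun h => hcn h.symm⟩
          show d.1 ≤ b n
          have : (N-1)*m < b c.2 := by omega
          omega
        · have hsw : csw c.2 n d = (d.1, d.2) := by
            unfold csw; rw [Equiv.swap_apply_of_ne_of_ne hdc hdn]
          rw [hsw]
          exact ⟨⟨g1, by show d.2 ≤ n; omega, g3, g6⟩, hdc⟩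
      set P := insert c Q' with hP
      have hcQ' : c ∉ Q' := by
        intro h
        have := (hQ'row c h).2
        omega
      have hPcell : ∀ e ∈ P, IsCell b n e := by
        intro e he
        rw [hP, Finset.mem_insert] at he
        rcases he with rfl | he
        · exact ⟨u3, u4, u1, u5⟩
        · exact (hQ'cell e he).1
      have hPcard : P.card = k := by
        rw [hP, Finset.card_insert_of_notMem hcQ', hQ', Finset.card_image_of_injective _ (csw_inj _ _), hQcard]
        omega
      have hclvl : (c.1-1)/m = N-1 := lvl_idx m hm (by omega) u2
      have hPpl : IsMLevelPlacement m b n P := by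
        refine ⟨hPcell, ?_, ?_⟩
        · intro e he e' he' hee
          rw [hP, Finset.mem_insert] at he he'
          rcases he with rfl | he <;> rcases he' with rfl | he'
          · rfl
          · exact absurd hee.symm (hQ'cell e' he').2
          · exact absurd hee (hQ'cell e he).2
          · rw [hQ', Finset.mem_image] at he he'
            obtain ⟨d, hd, rfl⟩ := he
            obtain ⟨d', hd', rfl⟩ := he'
            have : d.2 = d'.2 := (Equiv.swap c.2 n).injective hee
            rw [hQcol d hd d' hd' this]
        · intro e he e' he' hee
          have hlv : ∀ f ∈ Q', (f.1 - 1)/m < N-1 := by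
            intro f hf
            exact lvl_lt m hm (hQ'row f hf).1 (hQ'row f hf).2
          rw [hP, Finset.mem_insert] at he he'
          rcases he with rfl | he <;> rcases he' with rfl | he'
          · rfl
          · exact absurd (hee ▸ hclvl) (by have := hlv e' he'; omega)
          · exact absurd (hee.symm ▸ hclvl) (by have := hlv e he; omega)
          · rw [hQ', Finset.mem_image] at he he'
            obtain ⟨d, hd, rfl⟩ := he
            obtain ⟨d', hd', rfl⟩ := he'
            rw [csw_fst, csw_fst] at hee
            rw [hQlvl d hd d' hd' hee]
      have hPA1 : P ∈ A1 := by
        rw [hA1, Finset.mem_filter, hA, mem_SP hub]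
        refine ⟨⟨hPpl, hPcard⟩, ?_⟩
        push_neg
        exact ⟨c, Finset.mem_insert_self _ _, by omega⟩
      refine ⟨P, hPA1, ?_⟩
      have hchoose : P.choose _ (hexu P hPA1) = c := by
        have := P.choose_spec _ (hexu P hPA1)
        exact (hexu P hPA1).unique this ⟨Finset.mem_insert_self _ _, by omega⟩
      have herase : P.erase c = Q' := by
        rw [hP, Finset.erase_insert hcQ']
      rw [Prod.ext_iff]
      constructor
      · exact hchoose
      · dsimp only
        rw [hchoose, herase, hQ', image_csw_csw]
  -- assemble
  rw [rkm_eq_card hub, rkm_eq_card hub', rkm_eq_card hub'', ← hA, ← hA0eq, ← hLvcard, ← hA1card]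
  omega

end Recursion

/-! ### factorization identity -/

lemma lvlCount_ctb (m : ℕ) (b : ℕ → ℕ) (n i : ℕ) :
    lvlCount m b n i = ∑ j ∈ Finset.Icc 1 n, ctb m (b j) i := rfl

def ffac (m : ℕ) (x : ℤ) (j : ℕ) : ℤ := ∏ l ∈ Finset.range j, (x - l*m)

lemma ffac_succ (m : ℕ) (x : ℤ) (j : ℕ) : ffac m x (j+1) = x * ffac m (x - m) j := by
  unfold ffac
  rw [Finset.prod_range_succ']
  simp only [Nat.cast_zero, zero_mul, sub_zero]
  rw [mul_comm]
  congr 1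
  apply Finset.prod_congr rfl
  intro l _
  push_cast
  ring

lemma lvl_trunc (m : ℕ) (b : ℕ → ℕ) (n N i : ℕ) (hi : i ≤ N) :
    lvlCount m (fun j => min (b j) (N*m)) n i = lvlCount m b n i := by
  unfold lvlCount
  apply Finset.sum_congr rfl
  intro j _
  have h1 : min (min (b j) (N*m)) (i*m) = min (b j) (i*m) := by
    rw [min_assoc, min_eq_right (Nat.mul_le_mul_right m hi)]
  have h2 : min (min (b j) (N*m)) ((i-1)*m) = min (b j) ((i-1)*m) := by
    rw [min_assoc, min_eq_right (Nat.mul_le_mul_right m (by omega : i - 1 ≤ N))]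
  rw [h1, h2]

lemma lvl_drop_col (m : ℕ) (c : ℕ → ℕ) (n i : ℕ) (hn : 1 ≤ n) :
    lvlCount m c n i = lvlCount m c (n-1) i + ctb m (c n) i := by
  rw [lvlCount_ctb, lvlCount_ctb]
  have h : n - 1 + 1 = n := by omega
  rw [← h, Finset.sum_Icc_succ_top (by omega : 1 ≤ n - 1 + 1), h]

lemma star_step (m : ℕ) (hm : 0 < m) (N : ℕ) (b : ℕ → ℕ) (n : ℕ)
    (hub : ∀ j, 1 ≤ j → j ≤ n → b j ≤ N*m)
    (ihb : ∀ x : ℤ, (∑ k ∈ Finset.range (N+1), (rkm m b n k : ℤ) * ffac m x (N - k))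
      = ∏ i ∈ Finset.Icc 1 N, (x + (lvlCount m b n i : ℤ) + i*m - N*m))
    (x : ℤ) :
    (∑ k ∈ Finset.range (N+2), (rkm m b n k : ℤ) * ffac m x (N+1-k))
      = x * ∏ i ∈ Finset.Icc 1 N, (x + (lvlCount m b n i : ℤ) + i*m - (N+1)*m) := by
  have hrN : rkm m b n (N+1) = 0 := rkm_eq_zero m hm b n (N+1) N hub (lt_add_one N)
  rw [Finset.sum_range_succ, hrN]
  have hstep : ∀ k ∈ Finset.range (N+1), (rkm m b n k : ℤ) * ffac m x (N+1-k)
      = x * ((rkm m b n k : ℤ) * ffac m (x - m) (N - k)) := by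
    intro k hk
    rw [Finset.mem_range] at hk
    have h1 : N + 1 - k = (N - k) + 1 := by omega
    rw [h1, ffac_succ]
    ring
  rw [Finset.sum_congr rfl hstep, ← Finset.mul_sum, ihb (x - m)]
  have hfac : ∀ i ∈ Finset.Icc 1 N, ((x - m) + (lvlCount m b n i : ℤ) + i*m - N*m)
      = (x + (lvlCount m b n i : ℤ) + i*m - (N+1)*m) := by
    intro i _
    push_cast
    ring
  rw [Finset.prod_congr rfl hfac]
  push_cast
  ring

theorem star (m : ℕ) (hm : 0 < m) (N : ℕ) : ∀ (b : ℕ → ℕ) (n : ℕ),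
    (∀ j j', 1 ≤ j → j ≤ j' → j' ≤ n → b j ≤ b j') →
    (∀ j, 1 ≤ j → j ≤ n → b j ≤ N*m) →
    ∀ x : ℤ,
    (∑ k ∈ Finset.range (N+1), (rkm m b n k : ℤ) * ffac m x (N - k))
      = ∏ i ∈ Finset.Icc 1 N, (x + (lvlCount m b n i : ℤ) + i*m - N*m) := by
  induction N with
  | zero =>
    intro b n hmono hub x
    simp [rkm_zero, ffac]
  | succ N ih =>
    intro b n hmono hub x
    by_cases h0 : lvlCount m b n (N+1) = 0
    · -- no cells in the top level
      have hub' : ∀ j, 1 ≤ j → j ≤ n → b j ≤ N*m := by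
        intro j h1 h2
        have := col_le_of_lvl_zero m hm b n (N+1) (by omega)
          (by rw [← lvlCount_ctb]; exact h0) j (Finset.mem_Icc.mpr ⟨h1, h2⟩)
        simpa using this
      have h1 := star_step m hm N b n hub' (ih b n hmono hub') x
      have h2 : N + 2 = N + 1 + 1 := by omega
      rw [h2] at h1
      rw [h1, Finset.prod_Icc_succ_top (by omega : 1 ≤ N+1), h0]
      push_cast
      ring
    · -- there is a column reaching the top level
      rw [lvlCount_ctb] at h0
      obtain ⟨j₀, hj₀, hj₀ne⟩ := Finset.exists_ne_zero_of_sum_ne_zero h0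
      rw [Finset.mem_Icc] at hj₀
      have hn : 1 ≤ n := le_trans hj₀.1 hj₀.2
      have hbj₀ : N*m < b j₀ := by
        have := ctb_pos_gt m (b j₀) (N+1) hj₀ne
        simpa using this
      have hbn : N*m < b n := lt_of_lt_of_le hbj₀ (hmono j₀ n hj₀.1 hj₀.2 le_rfl)
      set b' : ℕ → ℕ := fun j => min (b j) (N*m) with hb'
      have hub' : ∀ j, 1 ≤ j → j ≤ n → b' j ≤ N*m := fun j _ _ => min_le_right _ _
      have hub'' : ∀ j, 1 ≤ j → j ≤ n-1 → b' j ≤ N*m := fun j h1 h2 => min_le_right _ _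
      have hmono' : ∀ j j', 1 ≤ j → j ≤ j' → j' ≤ n → b' j ≤ b' j' :=
        fun j j' h1 h2 h3 => min_le_min (hmono j j' h1 h2 h3) le_rfl
      have hmono'' : ∀ j j', 1 ≤ j → j ≤ j' → j' ≤ n-1 → b' j ≤ b' j' :=
        fun j j' h1 h2 h3 => hmono' j j' h1 h2 (by omega)
      -- the recursion
      have hrec : ∀ k : ℕ, (rkm m b n (k+1) : ℤ)
          = (rkm m b' n (k+1) : ℤ)
            + (lvlCount m b n (N+1) : ℤ) * (rkm m b' (n-1) k : ℤ) := by
        intro k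
        have h := rkm_rec m hm b n (N+1) (k+1) hn (by omega) hmono hub
          (by simpa using hbn)
        simp only [Nat.add_sub_cancel] at h
        rw [← hb'] at h
        exact_mod_cast h
      -- split the sum
      rw [Finset.sum_range_succ']
      have hsplit : ∀ k ∈ Finset.range (N+1),
          (rkm m b n (k+1) : ℤ) * ffac m x (N+1-(k+1))
          = (rkm m b' n (k+1) : ℤ) * ffac m x (N+1-(k+1))
            + (lvlCount m b n (N+1) : ℤ)
              * ((rkm m b' (n-1) k : ℤ) * ffac m x (N-k)) := by
        intro k hk
        have hidx : N + 1 - (k+1) = N - k := by omega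
        rw [hidx, hrec k]
        ring
      rw [Finset.sum_congr rfl hsplit, Finset.sum_add_distrib, ← Finset.mul_sum]
      -- group 1 : placements entirely on the truncated board
      have hG1 : (∑ k ∈ Finset.range (N+1), (rkm m b' n (k+1) : ℤ) * ffac m x (N+1-(k+1)))
            + (rkm m b n 0 : ℤ) * ffac m x (N+1-0)
          = ∑ k ∈ Finset.range (N+2), (rkm m b' n k : ℤ) * ffac m x (N+1-k) := by
        rw [Finset.sum_range_succ' (fun k => (rkm m b' n k : ℤ) * ffac m x (N+1-k)) (N+1)]
        rw [rkm_zero, rkm_zero]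
      have hG1v := star_step m hm N b' n hub' (ih b' n hmono' hub') x
      -- group 2
      have hG2 := ih b' (n-1) hmono'' hub'' x
      -- level counts of the truncated boards
      have hLam : ∀ i ∈ Finset.Icc 1 N, lvlCount m b' n i = lvlCount m b n i := by
        intro i hi
        rw [Finset.mem_Icc] at hi
        exact lvl_trunc m b n N i hi.2
      have hLam2 : ∀ i ∈ Finset.Icc 1 N,
          (lvlCount m b' (n-1) i : ℤ) = (lvlCount m b n i : ℤ) - m := by
        intro i hi
        rw [Finset.mem_Icc] at hi
        have h1 : lvlCount m b' n i = lvlCount m b' (n-1) i + ctb m (b' n) i :=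
          lvl_drop_col m b' n i hn
        have h2 : b' n = N*m := min_eq_right (by omega)
        have h3 : ctb m (b' n) i = m := by
          rw [h2]; exact ctb_eq_m m (N*m) i hi.1 (Nat.mul_le_mul_right m hi.2)
        rw [h3] at h1
        rw [hLam i (Finset.mem_Icc.mpr hi)] at h1
        have : (lvlCount m b n i : ℤ) = (lvlCount m b' (n-1) i : ℤ) + m := by
          exact_mod_cast congrArg (Nat.cast : ℕ → ℤ) h1
        omega
      -- assemble
      set lam := fun i => (lvlCount m b n i : ℤ) with hlam
      have hQ1 : (∏ i ∈ Finset.Icc 1 N, (x + (lvlCount m b' n i : ℤ) + i*m - (N+1)*m))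
          = ∏ i ∈ Finset.Icc 1 N, (x + lam i + i*m - (N+1)*m) := by
        apply Finset.prod_congr rfl
        intro i hi
        rw [hLam i hi]
      have hQ2 : (∏ i ∈ Finset.Icc 1 N, (x + (lvlCount m b' (n-1) i : ℤ) + i*m - N*m))
          = ∏ i ∈ Finset.Icc 1 N, (x + lam i + i*m - (N+1)*m) := by
        apply Finset.prod_congr rfl
        intro i hi
        rw [hLam2 i hi]
        push_cast
        ring
      have e1 : (∑ k ∈ Finset.range (N+1), (rkm m b' n (k+1) : ℤ) * ffac m x (N+1-(k+1)))
            + (rkm m b n 0 : ℤ) * ffac m x (N+1-0)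
          = x * ∏ i ∈ Finset.Icc 1 N, (x + lam i + i*m - (N+1)*m) := by
        rw [hG1]
        have h2 : N + 2 = N + 1 + 1 := by omega
        rw [h2] at hG1v
        rw [← hQ1, ← hG1v]
      have e2 : (∑ k ∈ Finset.range (N+1), (rkm m b' (n-1) k : ℤ) * ffac m x (N-k))
          = ∏ i ∈ Finset.Icc 1 N, (x + lam i + i*m - (N+1)*m) := hG2.trans hQ2
      rw [Finset.prod_Icc_succ_top (by omega : 1 ≤ N+1)]
      push_cast at e1 e2 ⊢
      linear_combination e1 + (lvlCount m b n (N+1) : ℤ) * e2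

/-! ### extracting coefficients -/

lemma ffac_eval_zero (m : ℕ) {j i : ℕ} (hij : j < i) : ffac m ((j : ℤ)*m) i = 0 := by
  unfold ffac
  apply Finset.prod_eq_zero (Finset.mem_range.mpr hij)
  ring

lemma ffac_eval_pos (m : ℕ) (hm : 0 < m) (j : ℕ) : ffac m ((j : ℤ)*m) j ≠ 0 := by
  unfold ffac
  rw [Finset.prod_ne_zero_iff]
  intro l hl
  rw [Finset.mem_range] at hl
  have h1 : (l : ℤ) < (j : ℤ) := by exact_mod_cast hl
  have h2 : (0 : ℤ) < m := by exact_mod_cast hm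
  have : (j : ℤ)*m - l*m = (j - l)*m := by ring
  rw [this]
  exact mul_ne_zero (by omega) (by omega)

lemma extraction (m : ℕ) (hm : 0 < m) (N : ℕ) (d : ℕ → ℤ)
    (h : ∀ x : ℤ, ∑ k ∈ Finset.range (N+1), d k * ffac m x (N-k) = 0) :
    ∀ k ≤ N, d k = 0 := by
  have key : ∀ j, j ≤ N → d (N - j) = 0 := by
    intro j
    induction j using Nat.strong_induction_on with
    | _ j ihj =>
      intro hjN
      have hx := h ((j : ℤ)*m)
      rw [Finset.sum_eq_single (N - j)] at hx
      · have hidx : N - (N - j) = j := by omega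
        rw [hidx] at hx
        rcases mul_eq_zero.mp hx with h' | h'
        · exact h'
        · exact absurd h' (ffac_eval_pos m hm j)
      · intro k hk hne
        rw [Finset.mem_range] at hk
        rcases lt_trichotomy (N - k) j with hlt | heq | hgt
        · have : k = N - (N - k) := by omega
          rw [this, ihj (N - k) (by omega) (by omega), zero_mul]
        · exact absurd (by omega : k = N - j) hne
        · rw [ffac_eval_zero m hgt, mul_zero]
      · intro hne
        exact absurd (Finset.mem_range.mpr (by omega : N - j < N + 1)) hne
  intro k hk
  have h2 := key (N - k) (by omega)
  rwa [show N - (N - k) = k by omega] at h2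

/-! ### the key identity -/

lemma ctb_eq_mod (m : ℕ) (hm : 0 < m) (v : ℕ) : ctb m v (v/m + 1) = v % m := by
  have hdm : (v/m)*m + v%m = v := by rw [Nat.mul_comm]; exact Nat.div_add_mod v m
  have hmod := Nat.mod_lt v hm
  unfold ctb
  have h1 : v/m + 1 - 1 = v/m := rfl
  rw [h1]
  have h2 : (v/m + 1)*m = (v/m)*m + m := by ring
  rw [min_eq_left (by omega : v ≤ (v/m+1)*m), min_eq_right (by omega : (v/m)*m ≤ v)]
  omega

lemma key_identity (m : ℕ) (hm : 0 < m) (b : ℕ → ℕ) (n N j₀ : ℕ)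
    (hj₀ : j₀ ∈ Finset.Icc 1 n)
    (hi₀N : b j₀ / m + 1 ≤ N) :
    (∑ i' ∈ Finset.Icc 1 N, ctb m (lvlCount m b n i')
        ((lvlCount m b n (b j₀/m + 1))/m + 1))
      = (lvlCount m b n (b j₀/m + 1)) % m + (b j₀/m)*m := by
  set c := b j₀ with hc
  set i₀ := c/m + 1 with hi₀
  set v := lvlCount m b n i₀ with hv
  set i₁ := v/m + 1 with hi₁
  have hcdm : (c/m)*m + c%m = c := by rw [Nat.mul_comm]; exact Nat.div_add_mod c m
  have hcmod := Nat.mod_lt c hm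
  have hvdm : (v/m)*m + v%m = v := by rw [Nat.mul_comm]; exact Nat.div_add_mod v m
  have hi₀1 : i₀ - 1 = c/m := rfl
  have hi₁1 : i₁ - 1 = v/m := rfl
  have hi₀m : i₀*m = (c/m)*m + m := by rw [hi₀]; ring
  have hi₁m : i₁*m = (v/m)*m + m := by rw [hi₁]; ring
  have hi₀m1 : (i₀-1)*m = (c/m)*m := by rw [hi₀1]
  have hi₁m1 : (i₁-1)*m = (v/m)*m := by rw [hi₁1]
  -- Fact A : levels above i₀ are at most m⌊v/m⌋
  have factA : ∀ i', i₀ < i' → lvlCount m b n i' ≤ (v/m)*m := by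
    intro i' hi'
    set C := (Finset.Icc 1 n).filter (fun j => i₀*m < b j) with hC
    have hA1 : lvlCount m b n i' ≤ m * C.card := by
      rw [lvlCount_ctb]
      calc (∑ j ∈ Finset.Icc 1 n, ctb m (b j) i')
          ≤ ∑ j ∈ Finset.Icc 1 n, (if i₀*m < b j then m else 0) := by
            apply Finset.sum_le_sum
            intro j hj
            by_cases hcase : i₀*m < b j
            · rw [if_pos hcase]; exact ctb_le_m m (b j) i' (by omega)
            · rw [if_neg hcase]
              have hle : b j ≤ (i'-1)*m :=
                le_trans (by omega) (Nat.mul_le_mul_right m (by omega : i₀ ≤ i'-1))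
              exact le_of_eq (ctb_eq_zero m (b j) i' hle)
      _ = m * C.card := by
            rw [← Finset.sum_filter, ← hC, Finset.sum_const, smul_eq_mul, mul_comm]
    have hA2 : m * C.card ≤ v := by
      rw [hv, lvlCount_ctb]
      calc m * C.card = ∑ _j ∈ C, m := by rw [Finset.sum_const, smul_eq_mul, mul_comm]
      _ = ∑ j ∈ C, ctb m (b j) i₀ := Finset.sum_congr rfl (fun j hj => by
          rw [hC, Finset.mem_filter] at hj
          exact (ctb_eq_m m (b j) i₀ (by omega) (by omega)).symm)
      _ ≤ ∑ j ∈ Finset.Icc 1 n, ctb m (b j) i₀ :=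
          Finset.sum_le_sum_of_subset (by rw [hC]; exact Finset.filter_subset _ _)
    have hA3 : C.card ≤ v/m := by
      rw [Nat.le_div_iff_mul_le hm, mul_comm]; exact hA2
    calc lvlCount m b n i' ≤ m * C.card := hA1
    _ ≤ m * (v/m) := Nat.mul_le_mul_left m hA3
    _ = (v/m)*m := mul_comm _ _
  -- Fact B : levels below i₀ reach m(⌊v/m⌋ + 1)
  have factB : ∀ i', 1 ≤ i' → i' < i₀ → i₁*m ≤ lvlCount m b n i' := by
    intro i' h1 h2
    set D := (Finset.Icc 1 n).filter (fun j => (i₀-1)*m < b j) with hD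
    have hB1 : v ≤ m * D.card := by
      rw [hv, lvlCount_ctb]
      calc (∑ j ∈ Finset.Icc 1 n, ctb m (b j) i₀)
          ≤ ∑ j ∈ Finset.Icc 1 n, (if (i₀-1)*m < b j then m else 0) := by
            apply Finset.sum_le_sum
            intro j hj
            by_cases hcase : (i₀-1)*m < b j
            · rw [if_pos hcase]; exact ctb_le_m m (b j) i₀ (by omega)
            · rw [if_neg hcase]
              exact le_of_eq (ctb_eq_zero m (b j) i₀ (by omega))
      _ = m * D.card := by
            rw [← Finset.sum_filter, ← hD, Finset.sum_const, smul_eq_mul, mul_comm]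
    have hB2 : ∀ j ∈ D, ctb m (b j) i' = m := by
      intro j hj
      rw [hD, Finset.mem_filter] at hj
      apply ctb_eq_m m (b j) i' h1
      have : i'*m ≤ (i₀-1)*m := Nat.mul_le_mul_right m (by omega)
      omega
    have hB3 : m * D.card ≤ lvlCount m b n i' := by
      rw [lvlCount_ctb]
      calc m * D.card = ∑ _j ∈ D, m := by rw [Finset.sum_const, smul_eq_mul, mul_comm]
      _ = ∑ j ∈ D, ctb m (b j) i' := Finset.sum_congr rfl (fun j hj => (hB2 j hj).symm)
      _ ≤ ∑ j ∈ Finset.Icc 1 n, ctb m (b j) i' :=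
          Finset.sum_le_sum_of_subset (by rw [hD]; exact Finset.filter_subset _ _)
    rcases Nat.lt_or_ge v (m * D.card) with hcase | hcase
    · have hlt : v/m < D.card := by
        rw [Nat.div_lt_iff_lt_mul hm]
        have : D.card * m = m * D.card := Nat.mul_comm _ _
        omega
      have : i₁*m ≤ m * D.card := by
        rw [hi₁m]
        calc (v/m)*m + m = (v/m + 1)*m := by ring
        _ ≤ D.card * m := Nat.mul_le_mul_right m hlt
        _ = m * D.card := Nat.mul_comm _ _
      omega
    · have hveq : v = m * D.card := le_antisymm hB1 hcase
      by_cases hcc : (i₀-1)*m < c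
      · exfalso
        have hj₀D : j₀ ∈ D := by
          rw [hD, Finset.mem_filter]
          exact ⟨hj₀, by rw [← hc]; omega⟩
        have hsum0 : v = ∑ j ∈ D, ctb m (b j) i₀ := by
          rw [hv, lvlCount_ctb]
          refine (Finset.sum_subset (by rw [hD]; exact Finset.filter_subset _ _) ?_).symm
          intro j hj hjD
          apply ctb_eq_zero
          rw [hD, Finset.mem_filter] at hjD
          push_neg at hjD
          exact hjD hj
        have hsplit : (∑ j ∈ D, ctb m (b j) i₀)
            = ctb m (b j₀) i₀ + ∑ j ∈ D.erase j₀, ctb m (b j) i₀ :=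
          (Finset.add_sum_erase D _ hj₀D).symm
        have hupper : (∑ j ∈ D.erase j₀, ctb m (b j) i₀) ≤ (D.card - 1) * m := by
          calc (∑ j ∈ D.erase j₀, ctb m (b j) i₀) ≤ ∑ _j ∈ D.erase j₀, m :=
            Finset.sum_le_sum (fun j _ => ctb_le_m m (b j) i₀ (by omega))
          _ = (D.card - 1) * m := by
            rw [Finset.sum_const, smul_eq_mul, Finset.card_erase_of_mem hj₀D]
        have hctbj₀ : ctb m (b j₀) i₀ < m := by
          rw [← hc]
          unfold ctb
          rw [min_eq_left (by omega : c ≤ i₀*m), min_eq_right (by omega : (i₀-1)*m ≤ c)]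
          omega
        have hDc1 : 1 ≤ D.card := Finset.card_pos.mpr ⟨j₀, hj₀D⟩
        have hmm2 : m * D.card = (D.card - 1)*m + m := by
          calc m * D.card = D.card * m := Nat.mul_comm _ _
          _ = ((D.card - 1) + 1)*m := by rw [show D.card - 1 + 1 = D.card from by omega]
          _ = (D.card - 1)*m + m := by ring
        omega
      · have hceq : c = (i₀-1)*m := by omega
        have hj₀D : j₀ ∉ D := by
          rw [hD, Finset.mem_filter]
          push_neg
          intro _
          rw [← hc]
          omega
        have hsub : insert j₀ D ⊆ Finset.Icc 1 n := by
          rw [Finset.insert_subset_iff]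
          exact ⟨hj₀, by rw [hD]; exact Finset.filter_subset _ _⟩
        have hall : ∀ j ∈ insert j₀ D, ctb m (b j) i' = m := by
          intro j hj
          rcases Finset.mem_insert.mp hj with heq | hj'
          · rw [heq]
            apply ctb_eq_m m (b j₀) i' h1
            rw [← hc]
            have : i'*m ≤ (i₀-1)*m := Nat.mul_le_mul_right m (by omega)
            omega
          · exact hB2 j hj'
        have hlow : (D.card + 1) * m ≤ lvlCount m b n i' := by
          rw [lvlCount_ctb]
          calc (D.card + 1) * m = ∑ _j ∈ insert j₀ D, m := by
                rw [Finset.sum_const, smul_eq_mul, Finset.card_insert_of_notMem hj₀D]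
          _ = ∑ j ∈ insert j₀ D, ctb m (b j) i' :=
                Finset.sum_congr rfl (fun j hj => (hall j hj).symm)
          _ ≤ ∑ j ∈ Finset.Icc 1 n, ctb m (b j) i' := Finset.sum_le_sum_of_subset hsub
        have hDm : (D.card + 1) * m = m * D.card + m := by
          calc (D.card + 1)*m = D.card * m + m := by ring
          _ = m * D.card + m := by rw [Nat.mul_comm]
        have hvm : (v/m)*m ≤ v := Nat.div_mul_le_self v m
        omega
  -- now compute the sum
  have hterm : ∀ i' ∈ Finset.Icc 1 N, ctb m (lvlCount m b n i') i₁
      = (if i' < i₀ then m else if i' = i₀ then v % m else 0) := by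
    intro i' hi'
    rw [Finset.mem_Icc] at hi'
    rcases lt_trichotomy i' i₀ with hlt | heq | hgt
    · rw [if_pos hlt]
      exact ctb_eq_m m _ i₁ (by omega) (factB i' hi'.1 hlt)
    · rw [if_neg (by omega), if_pos heq, heq]
      exact ctb_eq_mod m hm v
    · rw [if_neg (by omega), if_neg (by omega)]
      apply ctb_eq_zero
      rw [hi₁m1]
      exact factA i' hgt
  rw [Finset.sum_congr rfl hterm]
  -- split the range
  have hIcc : Finset.Icc 1 N = Finset.Ioc 0 N := by
    ext a; rw [Finset.mem_Icc, Finset.mem_Ioc]; omega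
  rw [hIcc]
  rw [← Finset.sum_Ioc_consecutive _ (by omega : 0 ≤ i₀ - 1) (by omega : i₀ - 1 ≤ N)]
  rw [← Finset.sum_Ioc_consecutive _ (by omega : i₀ - 1 ≤ i₀) (by omega : i₀ ≤ N)]
  have hs1 : (∑ i' ∈ Finset.Ioc 0 (i₀-1), (if i' < i₀ then m else if i' = i₀ then v % m else 0))
      = (c/m)*m := by
    have hcongr : ∀ i' ∈ Finset.Ioc 0 (i₀-1),
        (if i' < i₀ then m else if i' = i₀ then v % m else 0) = m := by
      intro i' hi'
      rw [Finset.mem_Ioc] at hi'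
      rw [if_pos (by omega)]
    rw [Finset.sum_congr rfl hcongr, Finset.sum_const, smul_eq_mul, Nat.card_Ioc]
    have h9 : i₀ - 1 - 0 = c/m := by omega
    rw [h9]
  have hs2 : (∑ i' ∈ Finset.Ioc (i₀-1) i₀, (if i' < i₀ then m else if i' = i₀ then v % m else 0))
      = v % m := by
    have h : Finset.Ioc (i₀-1) i₀ = {i₀} := by
      ext a; rw [Finset.mem_Ioc, Finset.mem_singleton]; omega
    rw [h, Finset.sum_singleton, if_neg (by omega), if_pos rfl]
  have hs3 : (∑ i' ∈ Finset.Ioc i₀ N, (if i' < i₀ then m else if i' = i₀ then v % m else 0))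
      = 0 := by
    apply Finset.sum_eq_zero
    intro i' hi'
    rw [Finset.mem_Ioc] at hi'
    rw [if_neg (by omega), if_neg (by omega)]
  rw [hs1, hs2, hs3]
  omega

/-! ### multiset invariance -/

lemma map_update (s : Finset ℕ) (f g : ℕ → ℕ) (i₀ : ℕ) (hi : i₀ ∈ s)
    (hg : ∀ x ∈ s, x ≠ i₀ → g x = f x) :
    s.val.map g = g i₀ ::ₘ (s.val.map f).erase (f i₀) := by
  have hmem : i₀ ∈ s.val := hi
  have h1 : i₀ ::ₘ s.val.erase i₀ = s.val := Multiset.cons_erase hmem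
  have h2 : (s.val.map f).erase (f i₀) = (s.val.erase i₀).map f := by
    conv_lhs => rw [← h1]
    rw [Multiset.map_cons, Multiset.erase_cons_head]
  have h3 : s.val.map g = g i₀ ::ₘ (s.val.erase i₀).map g := by
    conv_lhs => rw [← h1]
    rw [Multiset.map_cons]
  rw [h3, h2]
  congr 1
  apply Multiset.map_congr rfl
  intro x hx
  have hxne : x ≠ i₀ := ((Multiset.Nodup.mem_erase_iff s.nodup).mp hx).1
  have hxs : x ∈ s := Multiset.mem_of_mem_erase hx
  exact hg x hxs hxne

lemma div_succ_mem_Icc {c S N m : ℕ} (h1 : c + 1 ≤ S) (hSN : S ≤ N) :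
    c/m + 1 ∈ Finset.Icc 1 N := by
  rw [Finset.mem_Icc]
  have h2 : c/m ≤ c := Nat.div_le_self c m
  generalize c/m = q at h2 ⊢
  omega

lemma multiset_invariant (m : ℕ) (hm : 0 < m) (S : ℕ) :
    ∀ (b : ℕ → ℕ) (n N : ℕ),
    (∀ j j', 1 ≤ j → j ≤ j' → j' ≤ n → b j ≤ b j') →
    (∑ j ∈ Finset.Icc 1 n, b j) = S → S ≤ N →
    ((Finset.Icc 1 N).val.map (fun i => lvlCount m b n i + i*m))
      = ((Finset.Icc 1 N).val.map (fun i =>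
          (∑ i' ∈ Finset.Icc 1 N, ctb m (lvlCount m b n i') i) + i*m)) := by
  induction S using Nat.strong_induction_on with
  | _ S ihS =>
    intro b n N hmono hsum hSN
    rcases Nat.eq_zero_or_pos S with rfl | hS
    · -- empty board
      have hb0 : ∀ j ∈ Finset.Icc 1 n, b j = 0 := fun j hj =>
        Finset.sum_eq_zero_iff.mp hsum j hj
      have hlam0 : ∀ i, lvlCount m b n i = 0 := by
        intro i
        rw [lvlCount_ctb]
        apply Finset.sum_eq_zero
        intro j hj
        rw [hb0 j hj]
        unfold ctb
        simp
      apply Multiset.map_congr rfl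
      intro i _
      rw [hlam0]
      have h : (∑ i' ∈ Finset.Icc 1 N, ctb m (lvlCount m b n i') i) = 0 := by
        apply Finset.sum_eq_zero
        intro i' _
        rw [hlam0]
        unfold ctb
        simp
      rw [h]
    · -- peel off one cell
      have hex : ∃ j ∈ Finset.Icc 1 n, b j ≠ 0 := by
        by_contra hcon
        push_neg at hcon
        have := Finset.sum_eq_zero hcon
        omega
      have hexists : ∃ j₀, (j₀ ∈ Finset.Icc 1 n ∧ b j₀ ≠ 0)
          ∧ ∀ j, 1 ≤ j → j < j₀ → b j = 0 := by
        have hFne : ((Finset.Icc 1 n).filter (fun j => b j ≠ 0)).Nonempty := by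
          obtain ⟨j, hj, hbj⟩ := hex
          exact ⟨j, Finset.mem_filter.mpr ⟨hj, hbj⟩⟩
        refine ⟨((Finset.Icc 1 n).filter (fun j => b j ≠ 0)).min' hFne, ?_, ?_⟩
        · have h := Finset.min'_mem _ hFne
          rw [Finset.mem_filter] at h
          exact h
        · intro j h1 h2
          by_contra hne
          have hj₀le : (((Finset.Icc 1 n).filter (fun j => b j ≠ 0)).min' hFne) ≤ n := by
            have h := Finset.min'_mem _ hFne
            rw [Finset.mem_filter, Finset.mem_Icc] at h
            exact h.1.2
          have hjF : j ∈ (Finset.Icc 1 n).filter (fun j => b j ≠ 0) :=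
            Finset.mem_filter.mpr ⟨Finset.mem_Icc.mpr ⟨h1, by omega⟩, hne⟩
          have := Finset.min'_le _ j hjF
          omega
      obtain ⟨j₀, ⟨hj₀Icc, hbj₀⟩, hzero⟩ := hexists
      have hj₀n : 1 ≤ j₀ ∧ j₀ ≤ n := Finset.mem_Icc.mp hj₀Icc
      obtain ⟨c, hbj₀c⟩ : ∃ c, b j₀ = c + 1 := ⟨b j₀ - 1, by omega⟩
      obtain ⟨b2, hb2j₀, hb2off⟩ :
          ∃ b2 : ℕ → ℕ, b2 j₀ = c ∧ ∀ j, j ≠ j₀ → b2 j = b j :=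
        ⟨Function.update b j₀ c, Function.update_self j₀ c b,
          fun j hj => Function.update_of_ne hj c b⟩
      have hb2mono : ∀ j j', 1 ≤ j → j ≤ j' → j' ≤ n → b2 j ≤ b2 j' := by
        intro j j' h1 h2 h3
        by_cases hjne : j = j₀
        · by_cases hjne' : j' = j₀
          · rw [hjne, hjne']
          · rw [hjne, hb2j₀, hb2off j' hjne']
            have h4 := hmono j₀ j' (by omega) (by omega) h3
            omega
        · by_cases hjne' : j' = j₀
          · rw [hb2off j hjne, hjne', hb2j₀]
            have h5 : j < j₀ := by omega
            have h6 := hzero j h1 h5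
            omega
          · rw [hb2off j hjne, hb2off j' hjne']
            exact hmono j j' h1 h2 h3
      have hsum2 : (∑ j ∈ Finset.Icc 1 n, b2 j) = S - 1 := by
        have e1 : b2 j₀ + (∑ j ∈ (Finset.Icc 1 n).erase j₀, b2 j) = ∑ j ∈ Finset.Icc 1 n, b2 j :=
          Finset.add_sum_erase _ _ hj₀Icc
        have e2 : b j₀ + (∑ j ∈ (Finset.Icc 1 n).erase j₀, b j) = ∑ j ∈ Finset.Icc 1 n, b j :=
          Finset.add_sum_erase _ _ hj₀Icc
        have e3 : (∑ j ∈ (Finset.Icc 1 n).erase j₀, b2 j)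
            = ∑ j ∈ (Finset.Icc 1 n).erase j₀, b j :=
          Finset.sum_congr rfl (fun j hj => hb2off j (Finset.ne_of_mem_erase hj))
        rw [e3, hb2j₀] at e1
        omega
      have hIH := ihS (S-1) (by omega) b2 n N hb2mono hsum2 (by omega)
      -- the level receiving the new cell
      have hcS : c + 1 ≤ S := by
        rw [← hbj₀c, ← hsum]
        exact Finset.single_le_sum (fun j _ => Nat.zero_le _) hj₀Icc
      have hi₀mem : c/m + 1 ∈ Finset.Icc 1 N := div_succ_mem_Icc hcS hSN
      -- λ relation
      have hlam : ∀ i, lvlCount m b n i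
          = lvlCount m b2 n i + (if i = c/m + 1 then 1 else 0) := by
        intro i
        rw [lvlCount_ctb, lvlCount_ctb]
        rw [← Finset.add_sum_erase _ (fun j => ctb m (b j) i) hj₀Icc,
            ← Finset.add_sum_erase _ (fun j => ctb m (b2 j) i) hj₀Icc]
        have hoff : (∑ j ∈ (Finset.Icc 1 n).erase j₀, ctb m (b j) i)
            = ∑ j ∈ (Finset.Icc 1 n).erase j₀, ctb m (b2 j) i :=
          Finset.sum_congr rfl (fun j hj => by rw [hb2off j (Finset.ne_of_mem_erase hj)])
        rw [hoff, hb2j₀, hbj₀c, ctb_succ m c i hm]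
        omega
      have hlami₀ : lvlCount m b n (c/m+1) = lvlCount m b2 n (c/m+1) + 1 := by
        rw [hlam (c/m+1), if_pos rfl]
      -- μ relation
      have hvS : lvlCount m b2 n (c/m+1) ≤ S - 1 := by
        rw [lvlCount_ctb, ← hsum2]
        exact lvl_le_sum m b2 n (c/m+1)
      have hvS' : lvlCount m b2 n (c/m+1) + 1 ≤ S := by omega
      have hi₁mem : (lvlCount m b2 n (c/m+1))/m + 1 ∈ Finset.Icc 1 N :=
        div_succ_mem_Icc hvS' hSN
      have hmu : ∀ i, (∑ i' ∈ Finset.Icc 1 N, ctb m (lvlCount m b n i') i)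
          = (∑ i' ∈ Finset.Icc 1 N, ctb m (lvlCount m b2 n i') i)
            + (if i = (lvlCount m b2 n (c/m+1))/m + 1 then 1 else 0) := by
        intro i
        rw [← Finset.add_sum_erase _ (fun i' => ctb m (lvlCount m b n i') i) hi₀mem,
            ← Finset.add_sum_erase _ (fun i' => ctb m (lvlCount m b2 n i') i) hi₀mem]
        have hoff : (∑ i' ∈ (Finset.Icc 1 N).erase (c/m+1), ctb m (lvlCount m b n i') i)
            = ∑ i' ∈ (Finset.Icc 1 N).erase (c/m+1), ctb m (lvlCount m b2 n i') i :=
          Finset.sum_congr rfl (fun i' hi' => by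
            rw [hlam i', if_neg (Finset.ne_of_mem_erase hi'), Nat.add_zero])
        rw [hoff, hlami₀, ctb_succ m (lvlCount m b2 n (c/m+1)) i hm]
        omega
      -- key identity
      have hkey := key_identity m hm b2 n N j₀ hj₀Icc
        (by rw [hb2j₀]; exact Finset.mem_Icc.mp hi₀mem |>.2)
      rw [hb2j₀] at hkey
      -- the two erased values agree
      have hval : (∑ i' ∈ Finset.Icc 1 N, ctb m (lvlCount m b2 n i')
            ((lvlCount m b2 n (c/m+1))/m + 1))
            + ((lvlCount m b2 n (c/m+1))/m + 1)*m
          = lvlCount m b2 n (c/m+1) + (c/m+1)*m := by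
        have e1 : ((lvlCount m b2 n (c/m+1))/m + 1)*m
            = ((lvlCount m b2 n (c/m+1))/m)*m + m := by ring
        have e2 : (c/m+1)*m = (c/m)*m + m := by ring
        have e3 : ((lvlCount m b2 n (c/m+1))/m)*m + (lvlCount m b2 n (c/m+1)) % m
            = lvlCount m b2 n (c/m+1) := by
          rw [Nat.mul_comm]
          exact Nat.div_add_mod _ m
        omega
      -- assemble the multisets
      rw [map_update (Finset.Icc 1 N) (fun i => lvlCount m b2 n i + i*m)
          (fun i => lvlCount m b n i + i*m) (c/m+1) hi₀mem
          (fun x _ hx => by rw [hlam x, if_neg hx, Nat.add_zero]),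
        map_update (Finset.Icc 1 N)
          (fun i => (∑ i' ∈ Finset.Icc 1 N, ctb m (lvlCount m b2 n i') i) + i*m)
          (fun i => (∑ i' ∈ Finset.Icc 1 N, ctb m (lvlCount m b n i') i) + i*m)
          ((lvlCount m b2 n (c/m+1))/m + 1) hi₁mem
          (fun x _ hx => by rw [hmu x, if_neg hx, Nat.add_zero])]
      have hIH' : ((Finset.Icc 1 N).val.map (fun i => lvlCount m b2 n i + i*m))
          = ((Finset.Icc 1 N).val.map (fun i =>
              (∑ i' ∈ Finset.Icc 1 N, ctb m (lvlCount m b2 n i') i) + i*m)) := hIH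
      have hhead : lvlCount m b n (c/m+1) + (c/m+1)*m
          = (∑ i' ∈ Finset.Icc 1 N, ctb m (lvlCount m b n i')
              ((lvlCount m b2 n (c/m+1))/m + 1))
            + ((lvlCount m b2 n (c/m+1))/m + 1)*m := by
        rw [hmu, if_pos rfl, hlami₀]
        omega
      have herased : lvlCount m b2 n (c/m+1) + (c/m+1)*m
          = (∑ i' ∈ Finset.Icc 1 N, ctb m (lvlCount m b2 n i')
              ((lvlCount m b2 n (c/m+1))/m + 1))
            + ((lvlCount m b2 n (c/m+1))/m + 1)*m := hval.symm
      rw [hIH', hhead, herased]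

lemma ctb_zero_w (m i : ℕ) : ctb m 0 i = 0 := by unfold ctb; simp

/-- Lemma 4.2: for any Ferrers board `B`, the board `l(B) = (l_t, …, l_1)` (where
`l_i` counts cells of `B` in level `i` and `t` is the largest index with `l_t ≠ 0`)
is a Ferrers board, is a singleton board, and is `m`-level rook equivalent to `B`. -/
theorem l_operator_lemma (m n t : ℕ) (hm : 0 < m) (b : ℕ → ℕ)
    (hmono : ∀ j k, 1 ≤ j → j ≤ k → k ≤ n → b j ≤ b k)
    (ht : lvlCount m b n t ≠ 0) (htmax : ∀ i, t < i → lvlCount m b n i = 0)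
    (lB : ℕ → ℕ)
    (hlB : lB = fun j => if 1 ≤ j ∧ j ≤ t then lvlCount m b n (t + 1 - j) else 0) :
    (∀ j k, 1 ≤ j → j ≤ k → k ≤ t → lB j ≤ lB k) ∧
    IsSingletonBoard m lB t ∧
    (∀ k, rkm m lB t k = rkm m b n k) := by
  have hlBval : ∀ j, lB j = if 1 ≤ j ∧ j ≤ t then lvlCount m b n (t + 1 - j) else 0 :=
    fun j => by rw [hlB]
  have ht1 : 1 ≤ t := by
    by_contra h
    have h0 : t = 0 := by omega
    apply ht
    rw [h0]
    unfold lvlCount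
    apply Finset.sum_eq_zero
    intro j _
    simp
  -- part (a)
  have hmono_l : ∀ j k, 1 ≤ j → j ≤ k → k ≤ t → lB j ≤ lB k := by
    intro j k h1 h2 h3
    rw [hlBval j, hlBval k, if_pos ⟨h1, by omega⟩, if_pos ⟨by omega, h3⟩,
      lvlCount_ctb, lvlCount_ctb]
    exact lvl_anti m b n (by omega : 1 ≤ t+1-k) (by omega : t+1-k ≤ t+1-j)
  refine ⟨hmono_l, ?_, ?_⟩
  -- part (b)
  · intro j h1 h2 hnd
    rw [hlBval j, if_pos ⟨h1, by omega⟩] at hnd ⊢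
    rw [hlBval (j+1), if_pos ⟨by omega, by omega⟩]
    have hidx : t+1-(j+1) = (t+1-j) - 1 := by omega
    rw [hidx]
    have hkey := singleton_step m hm b n (t+1-j) (by omega)
      (by rw [← lvlCount_ctb]; exact hnd)
    rw [lvlCount_ctb, lvlCount_ctb]
    omega
  -- part (c)
  · obtain ⟨N, hN⟩ : ∃ N, (∑ j ∈ Finset.Icc 1 n, b j) = N := ⟨_, rfl⟩
    have htN : t ≤ N := by
      have htc := ht
      rw [lvlCount_ctb] at htc
      obtain ⟨j₁, hj₁, hj₁ne⟩ := Finset.exists_ne_zero_of_sum_ne_zero htc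
      have h1 : (t-1)*m < b j₁ := ctb_pos_gt m (b j₁) t hj₁ne
      have h2 : b j₁ ≤ N := by
        rw [← hN]
        exact Finset.single_le_sum (fun _ _ => Nat.zero_le _) hj₁
      have h3 : t - 1 ≤ (t-1)*m := Nat.le_mul_of_pos_right (t-1) hm
      omega
    have hub_b : ∀ j, 1 ≤ j → j ≤ n → b j ≤ N*m := by
      intro j h1 h2
      have h3 : b j ≤ N := by
        rw [← hN]
        exact Finset.single_le_sum (fun _ _ => Nat.zero_le _) (Finset.mem_Icc.mpr ⟨h1, h2⟩)
      have h4 : N ≤ N*m := Nat.le_mul_of_pos_right N hm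
      omega
    have hub_l : ∀ j, 1 ≤ j → j ≤ t → lB j ≤ N*m := by
      intro j h1 h2
      rw [hlBval j, if_pos ⟨h1, h2⟩]
      have h3 : lvlCount m b n (t+1-j) ≤ N := by
        rw [← hN, lvlCount_ctb]
        exact lvl_le_sum m b n (t+1-j)
      have h4 : N ≤ N*m := Nat.le_mul_of_pos_right N hm
      omega
    -- the level counts of lB
    have hmu' : ∀ i, lvlCount m lB t i
        = ∑ i' ∈ Finset.Icc 1 N, ctb m (lvlCount m b n i') i := by
      intro i
      rw [lvlCount_ctb]
      have h1 : (∑ j ∈ Finset.Icc 1 t, ctb m (lB j) i)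
          = ∑ j ∈ Finset.Icc 1 t, ctb m (lvlCount m b n (t+1-j)) i := by
        apply Finset.sum_congr rfl
        intro j hj
        rw [Finset.mem_Icc] at hj
        rw [hlBval j, if_pos hj]
      have h2 : (∑ j ∈ Finset.Icc 1 t, ctb m (lvlCount m b n (t+1-j)) i)
          = ∑ i' ∈ Finset.Icc 1 t, ctb m (lvlCount m b n i') i := by
        apply Finset.sum_nbij' (fun j => t+1-j) (fun j => t+1-j)
        · intro a ha
          rw [Finset.mem_Icc] at ha ⊢
          omega
        · intro a ha
          rw [Finset.mem_Icc] at ha ⊢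
          omega
        · intro a ha
          rw [Finset.mem_Icc] at ha
          omega
        · intro a ha
          rw [Finset.mem_Icc] at ha
          omega
        · intro a ha
          rfl
      have h3 : (∑ i' ∈ Finset.Icc 1 t, ctb m (lvlCount m b n i') i)
          = ∑ i' ∈ Finset.Icc 1 N, ctb m (lvlCount m b n i') i := by
        apply Finset.sum_subset
        · intro a ha
          rw [Finset.mem_Icc] at ha ⊢
          omega
        · intro a ha ha'
          rw [Finset.mem_Icc] at ha ha'
          rw [htmax a (by omega), ctb_zero_w]
      exact h1.trans (h2.trans h3)
    -- multiset invariance gives equality of the products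
    have hmsets := multiset_invariant m hm N b n N hmono hN le_rfl
    have hprod : ∀ x : ℤ, (∏ i ∈ Finset.Icc 1 N, (x + (lvlCount m b n i : ℤ) + i*m - N*m))
        = ∏ i ∈ Finset.Icc 1 N, (x + (lvlCount m lB t i : ℤ) + i*m - N*m) := by
      intro x
      have e1 : ∀ f : ℕ → ℕ, (∏ i ∈ Finset.Icc 1 N, (x + (f i : ℤ) + i*m - N*m))
          = (((Finset.Icc 1 N).val.map (fun i => f i + i*m)).map
              (fun w : ℕ => x + (w:ℤ) - N*m)).prod := by
        intro f
        rw [Multiset.map_map, Finset.prod_eq_multiset_prod]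
        apply congrArg Multiset.prod
        apply Multiset.map_congr rfl
        intro i _
        simp only [Function.comp_apply]
        push_cast
        ring
      rw [e1 (fun i => lvlCount m b n i), e1 (fun i => lvlCount m lB t i)]
      apply congrArg Multiset.prod
      apply congrArg _
      rw [hmsets]
      apply (Multiset.map_congr rfl ?_).symm
      intro i _
      rw [hmu' i]
    -- the factorization identities
    have hstar_b := star m hm N b n hmono hub_b
    have hstar_l := star m hm N lB t hmono_l hub_l
    have hdiff : ∀ k ≤ N, rkm m b n k = rkm m lB t k := by
      have hz := extraction m hm N (fun k => (rkm m b n k : ℤ) - (rkm m lB t k : ℤ)) ?_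
      · intro k hk
        have h := hz k hk
        omega
      · intro x
        have hsplit : (∑ k ∈ Finset.range (N+1),
            ((rkm m b n k : ℤ) - (rkm m lB t k : ℤ)) * ffac m x (N-k))
            = (∑ k ∈ Finset.range (N+1), (rkm m b n k : ℤ) * ffac m x (N-k))
              - ∑ k ∈ Finset.range (N+1), (rkm m lB t k : ℤ) * ffac m x (N-k) := by
          rw [← Finset.sum_sub_distrib]
          apply Finset.sum_congr rfl
          intro k _
          ring
        rw [hsplit, hstar_b x, hstar_l x, ← hprod x, sub_self]
    intro k
    rcases le_or_gt k N with hk | hk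
    · exact (hdiff k hk).symm
    · rw [rkm_eq_zero m hm lB t k N hub_l hk, rkm_eq_zero m hm b n k N hub_b hk]
end

section
/- Let ζ = (a_1,...,a_n) be an integer vector with a_1 = 0, and define b_j = (j−1)m − a_j. Then B = (b_1,...,b_n) is a singleton Ferrers board with ζ_m(B) = ζ if and only if (i) a_{j+1} ≤ a_j + m for all 1 ≤ j < n, and (ii) whenever neither a_{j+1} nor a_j is a multiple of m, ⌊a_{j+1}⌋_m ≤ ⌊a_j⌋_m. -/
/-- `⌊x⌋_m`: the largest multiple of `m` at most `x` (floor division). -/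
def mfloorZ (m : ℕ) (x : ℤ) : ℤ := (m : ℤ) * Int.fdiv x m

lemma mfloorZ_facts (m : ℕ) (hm : 0 < m) (x : ℤ) :
    ((m : ℤ) ∣ mfloorZ m x) ∧ mfloorZ m x ≤ x ∧ x < mfloorZ m x + m := by
  have hM : (0:ℤ) < m := by exact_mod_cast hm
  unfold mfloorZ
  rw [Int.fdiv_eq_ediv_of_nonneg x hM.le]
  refine ⟨⟨_, rfl⟩, ?_, ?_⟩
  · have h1 := Int.emod_add_mul_ediv x m
    have h2 := Int.emod_nonneg x (by omega : (m:ℤ) ≠ 0)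
    linarith
  · have h1 := Int.emod_add_mul_ediv x m
    have h2 := Int.emod_lt_of_pos x hM
    linarith

lemma dvd_le_of_lt_add (m : ℕ) (hm : 0 < m) {y z : ℤ} (hy : (m:ℤ) ∣ y) (hz : (m:ℤ) ∣ z)
    (h : y < z + m) : y ≤ z := by
  by_contra hc
  push_neg at hc
  have hd : (m:ℤ) ∣ (y - z) := dvd_sub hy hz
  have := Int.le_of_dvd (by omega) hd
  omega

lemma mfloorZ_unique (m : ℕ) (hm : 0 < m) {x y : ℤ} (hy : (m:ℤ) ∣ y)
    (h1 : y ≤ x) (h2 : x < y + m) : mfloorZ m x = y := by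
  obtain ⟨hd, hle, hlt⟩ := mfloorZ_facts m hm x
  have a1 : mfloorZ m x ≤ y := dvd_le_of_lt_add m hm hd hy (by omega)
  have a2 : y ≤ mfloorZ m x := dvd_le_of_lt_add m hm hy hd (by omega)
  omega

lemma dvd_sub_iff' (m : ℕ) {c x : ℤ} (hc : (m:ℤ) ∣ c) :
    (m:ℤ) ∣ (c - x) ↔ (m:ℤ) ∣ x := by
  constructor
  · intro h
    have := dvd_sub hc h
    simpa using this
  · intro h
    exact dvd_sub hc h

lemma mfloorZ_sub_of_dvd (m : ℕ) (hm : 0 < m) {c x : ℤ} (hc : (m:ℤ) ∣ c)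
    (hx : (m:ℤ) ∣ x) : mfloorZ m (c - x) = c - x := by
  have hM : (0:ℤ) < m := by exact_mod_cast hm
  exact mfloorZ_unique m hm (dvd_sub hc hx) le_rfl (by omega)

lemma mfloorZ_sub_of_not_dvd (m : ℕ) (hm : 0 < m) {c x : ℤ} (hc : (m:ℤ) ∣ c)
    (hx : ¬ (m:ℤ) ∣ x) : mfloorZ m (c - x) = c - mfloorZ m x - m := by
  obtain ⟨hd, hle, hlt⟩ := mfloorZ_facts m hm x
  have hne : mfloorZ m x ≠ x := by
    intro h
    exact hx (h ▸ hd)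
  have hlt' : mfloorZ m x < x := lt_of_le_of_ne hle hne
  refine mfloorZ_unique m hm ?_ (by omega) (by omega)
  exact dvd_sub (dvd_sub hc hd) dvd_rfl

/-- Proposition 4.3: Let `ζ = (a_1,…,a_n)` with `a_1 = 0` and set
`b_j = (j−1)m − a_j`.  Then `B = (b_1,…,b_n)` is a singleton Ferrers board
(nonnegative, weakly increasing, singleton condition) if and only if
(i) `a_{j+1} ≤ a_j + m` for all `j`, and (ii) whenever neither `a_{j+1}` nor `a_j`
is a multiple of `m`, `⌊a_{j+1}⌋_m ≤ ⌊a_j⌋_m`. -/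
theorem singleton_root_vector_characterization (m n : ℕ) (hm : 0 < m)
    (a : ℕ → ℤ) (ha : a 1 = 0) (b : ℕ → ℤ)
    (hb : b = fun j : ℕ => (m : ℤ) * ((j : ℤ) - 1) - a j) :
    ((∀ j, 1 ≤ j → j ≤ n → 0 ≤ b j) ∧
     (∀ j, 1 ≤ j → j < n → b j ≤ b (j + 1)) ∧
     (∀ j, 1 ≤ j → j < n → ¬ ((m : ℤ) ∣ b j) → mfloorZ m (b j) < mfloorZ m (b (j + 1)))) ↔
    ((∀ j, 1 ≤ j → j < n → a (j + 1) ≤ a j + m) ∧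
     (∀ j, 1 ≤ j → j < n → ¬ ((m : ℤ) ∣ a (j + 1)) → ¬ ((m : ℤ) ∣ a j) →
        mfloorZ m (a (j + 1)) ≤ mfloorZ m (a j))) := by
  have hM : (0:ℤ) < m := by exact_mod_cast hm
  have hb' : ∀ j : ℕ, b j = (m : ℤ) * ((j : ℤ) - 1) - a j := fun j => by rw [hb]
  have hb2 : ∀ j : ℕ, b (j + 1) = ((m : ℤ) * ((j : ℤ) - 1) + m) - a (j + 1) := by
    intro j
    rw [hb']
    push_cast
    ring
  have hcd : ∀ j : ℕ, (m:ℤ) ∣ (m : ℤ) * ((j : ℤ) - 1) := fun j => ⟨_, rfl⟩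
  have hcd2 : ∀ j : ℕ, (m:ℤ) ∣ ((m : ℤ) * ((j : ℤ) - 1) + m) := fun j =>
    dvd_add (hcd j) dvd_rfl
  constructor
  · rintro ⟨h0, h1, h2⟩
    constructor
    · intro j hj hjn
      have h := h1 j hj hjn
      rw [hb' j, hb2 j] at h
      linarith
    · intro j hj hjn hA' hA
      have hnd : ¬ (m:ℤ) ∣ b j := by
        rw [hb' j]
        rw [dvd_sub_iff' m (hcd j)]
        exact hA
      have H := h2 j hj hjn hnd
      rw [hb' j, hb2 j, mfloorZ_sub_of_not_dvd m hm (hcd j) hA,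
        mfloorZ_sub_of_not_dvd m hm (hcd2 j) hA'] at H
      have := dvd_le_of_lt_add m hm (mfloorZ_facts m hm (a (j+1))).1
        (mfloorZ_facts m hm (a j)).1 (by linarith)
      exact this
  · rintro ⟨h1, h2⟩
    have key : ∀ j, 1 ≤ j → j ≤ n → a j ≤ (m:ℤ) * ((j:ℤ) - 1) := by
      intro j
      induction j with
      | zero => omega
      | succ k ih =>
        intro h1k hkn
        by_cases hk : k = 0
        · subst hk
          simp [ha]
        · have hk1 : 1 ≤ k := by omega
          have hknlt : k < n := by omega
          have hih := ih hk1 (by omega)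
          have hstep := h1 k hk1 hknlt
          have : (m:ℤ) * (((k:ℕ)+1 : ℤ) - 1) = (m:ℤ) * ((k:ℤ) - 1) + m := by ring
          push_cast
          linarith
    refine ⟨?_, ?_, ?_⟩
    · intro j hj hjn
      rw [hb' j]
      have := key j hj hjn
      linarith
    · intro j hj hjn
      rw [hb' j, hb2 j]
      have := h1 j hj hjn
      linarith
    · intro j hj hjn hnd
      have hA : ¬ (m:ℤ) ∣ a j := by
        intro h
        apply hnd
        rw [hb' j]
        exact dvd_sub (hcd j) h
      obtain ⟨hdA, hleA, hltA⟩ := mfloorZ_facts m hm (a j)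
      have hstep := h1 j hj hjn
      rw [hb' j, hb2 j, mfloorZ_sub_of_not_dvd m hm (hcd j) hA]
      by_cases hA' : (m:ℤ) ∣ a (j + 1)
      · rw [mfloorZ_sub_of_dvd m hm (hcd2 j) hA']
        linarith
      · rw [mfloorZ_sub_of_not_dvd m hm (hcd2 j) hA']
        have := h2 j hj hjn hA' hA
        linarith
end

section
/- For any Ferrers board B = (b_1,...,b_n) and positive integer m, the sum over k from 0 to n of f_{k,m}(B) · x↓_{n-k,m} equals the product over j from 1 to n of (x + b_j − (j−1)m), as polynomials in x. -/
/-- The `m`-falling factorial `x↓_{n,m} = x(x-m)(x-2m)⋯(x-(n-1)m)`. -/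
def fallFact (x : ℤ) (n m : ℕ) : ℤ := ∏ i ∈ Finset.range n, (x - (m : ℤ) * i)

/-- The cells of the Ferrers board with column heights `b 1, …, b n`
(cells are pairs `(row, column)`, 1-indexed). -/
def cells (b : ℕ → ℕ) (n : ℕ) : Finset (ℕ × ℕ) :=
  ((Finset.Icc 1 ((Finset.Icc 1 n).sup b)) ×ˢ Finset.Icc 1 n).filter fun c => c.1 ≤ b c.2

/-- The `m`-weight of a file placement: `∏_i 1↓_{y_i,m}` where `y_i` is the number
of rooks in row `i`. -/
def wtm (m : ℕ) (F : Finset (ℕ × ℕ)) : ℤ :=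
  ∏ i ∈ F.image Prod.fst, fallFact 1 ((F.filter fun c => c.1 = i).card) m

/-- `f_{k,m}(B)`: the sum of `m`-weights over all file placements (no two rooks in
the same column) of `k` rooks on the board. -/
def fkm (m : ℕ) (b : ℕ → ℕ) (n k : ℕ) : ℤ :=
  ∑ F ∈ (cells b n).powerset.filter
      (fun F => (∀ c ∈ F, ∀ c' ∈ F, c.2 = c'.2 → c = c') ∧ F.card = k),
    wtm m F

namespace MWF

lemma fallFact_succ (x : ℤ) (n m : ℕ) :
    fallFact x (n + 1) m = fallFact x n m * (x - (m : ℤ) * n) :=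
  Finset.prod_range_succ _ _

lemma mem_cells {b : ℕ → ℕ} {n : ℕ} {c : ℕ × ℕ} :
    c ∈ cells b n ↔ 1 ≤ c.1 ∧ c.1 ≤ b c.2 ∧ 1 ≤ c.2 ∧ c.2 ≤ n := by
  unfold cells
  simp only [Finset.mem_filter, Finset.mem_product, Finset.mem_Icc]
  constructor
  · rintro ⟨⟨⟨h1, _⟩, h3, h4⟩, h2⟩; exact ⟨h1, h2, h3, h4⟩
  · rintro ⟨h1, h2, h3, h4⟩
    exact ⟨⟨⟨h1, le_trans h2 (Finset.le_sup (Finset.mem_Icc.mpr ⟨h3, h4⟩))⟩, h3, h4⟩, h2⟩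

/-- The set of file placements of size `k`. -/
def plc (b : ℕ → ℕ) (n k : ℕ) : Finset (Finset (ℕ × ℕ)) :=
  (cells b n).powerset.filter
    (fun F => (∀ c ∈ F, ∀ c' ∈ F, c.2 = c'.2 → c = c') ∧ F.card = k)

lemma fkm_eq (m : ℕ) (b : ℕ → ℕ) (n k : ℕ) :
    fkm m b n k = ∑ F ∈ plc b n k, wtm m F := rfl

lemma mem_plc {b : ℕ → ℕ} {n k : ℕ} {F : Finset (ℕ × ℕ)} :
    F ∈ plc b n k ↔
      F ⊆ cells b n ∧ (∀ c ∈ F, ∀ c' ∈ F, c.2 = c'.2 → c = c') ∧ F.card = k := by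
  unfold plc
  rw [Finset.mem_filter, Finset.mem_powerset]

lemma le_of_mem_plc {b : ℕ → ℕ} {n k : ℕ} {F : Finset (ℕ × ℕ)}
    (h : F ∈ plc b n k) : k ≤ n := by
  obtain ⟨hsub, hinj, hcard⟩ := mem_plc.mp h
  have h1 : (F.image Prod.snd).card = F.card :=
    Finset.card_image_of_injOn (fun c hc c' hc' hcc => hinj c hc c' hc' hcc)
  have h2 : F.image Prod.snd ⊆ Finset.Icc 1 n := by
    intro j hj
    obtain ⟨c, hc, rfl⟩ := Finset.mem_image.mp hj
    have hcell := mem_cells.mp (hsub hc)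
    exact Finset.mem_Icc.mpr ⟨hcell.2.2.1, hcell.2.2.2⟩
  calc k = (F.image Prod.snd).card := by rw [h1, hcard]
    _ ≤ (Finset.Icc 1 n).card := Finset.card_le_card h2
    _ = n := by simp

lemma fkm_eq_zero {m : ℕ} {b : ℕ → ℕ} {n k : ℕ} (h : n < k) : fkm m b n k = 0 := by
  rw [fkm_eq]
  apply Finset.sum_eq_zero
  intro F hF
  exact absurd (le_of_mem_plc hF) (Nat.not_le.mpr h)

lemma plc_zero (b : ℕ → ℕ) (n : ℕ) : plc b n 0 = {∅} := by
  ext F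
  rw [mem_plc, Finset.mem_singleton]
  constructor
  · rintro ⟨-, -, hcard⟩; exact Finset.card_eq_zero.mp hcard
  · rintro rfl; simp

lemma wtm_empty (m : ℕ) : wtm m ∅ = 1 := by simp [wtm]

lemma fkm_zero (m : ℕ) (b : ℕ → ℕ) (n : ℕ) : fkm m b n 0 = 1 := by
  rw [fkm_eq, plc_zero, Finset.sum_singleton, wtm_empty]

lemma wtm_insert {m : ℕ} {F : Finset (ℕ × ℕ)} {i j : ℕ} (hj : ∀ c ∈ F, c.2 ≠ j) :
    wtm m (insert (i, j) F) =
      wtm m F * (1 - (m : ℤ) * ((F.filter fun c => c.1 = i).card)) := by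
  have hnot : (i, j) ∉ F := fun h => hj _ h rfl
  have himg : (insert (i, j) F).image Prod.fst = insert i (F.image Prod.fst) :=
    Finset.image_insert _ _ _
  have hcnt : ∀ r, r ≠ i →
      ((insert (i, j) F).filter fun c => c.1 = r) = F.filter fun c => c.1 = r := by
    intro r hr
    rw [Finset.filter_insert, if_neg]
    exact fun h => hr (by simpa using h.symm)
  have hcardi : ((insert (i, j) F).filter fun c => c.1 = i).card
      = (F.filter fun c => c.1 = i).card + 1 := by
    rw [Finset.filter_insert, if_pos rfl,
      Finset.card_insert_of_notMem (fun h => hnot (Finset.mem_of_mem_filter _ h))]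
  by_cases hi : i ∈ F.image Prod.fst
  · have himg' : insert i (F.image Prod.fst) = F.image Prod.fst :=
      Finset.insert_eq_self.mpr hi
    unfold wtm
    rw [himg, himg', ← Finset.mul_prod_erase _
        (fun r => fallFact 1 (((insert (i, j) F).filter fun c => c.1 = r).card) m) hi,
      ← Finset.mul_prod_erase _
        (fun r => fallFact 1 ((F.filter fun c => c.1 = r).card) m) hi]
    have hprod : ∏ r ∈ (F.image Prod.fst).erase i,
          fallFact 1 (((insert (i, j) F).filter fun c => c.1 = r).card) m
        = ∏ r ∈ (F.image Prod.fst).erase i,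
          fallFact 1 ((F.filter fun c => c.1 = r).card) m :=
      Finset.prod_congr rfl (fun r hr => by rw [hcnt r (Finset.ne_of_mem_erase hr)])
    rw [hprod, hcardi, fallFact_succ]
    ring
  · have hcnt0 : (F.filter fun c => c.1 = i) = ∅ := by
      rw [Finset.filter_eq_empty_iff]
      intro c hc h
      exact hi (Finset.mem_image.mpr ⟨c, hc, h⟩)
    unfold wtm
    rw [himg, Finset.prod_insert hi]
    have h1 : ((insert (i, j) F).filter fun c => c.1 = i).card = 1 := by
      rw [hcardi, hcnt0]; simp
    have h2 : fallFact 1 1 m = 1 := by simp [fallFact]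
    rw [h1, h2, one_mul, hcnt0]
    simp only [Finset.card_empty, Nat.cast_zero, mul_zero, sub_zero, mul_one]
    exact Finset.prod_congr rfl (fun r hr => by rw [hcnt r (fun h => hi (h ▸ hr))])

lemma fkm_succ (m : ℕ) (b : ℕ → ℕ) (n k : ℕ)
    (hmono : ∀ j l, 1 ≤ j → j ≤ l → l ≤ n + 1 → b j ≤ b l) :
    fkm m b (n + 1) (k + 1) =
      fkm m b n (k + 1) + ((b (n + 1) : ℤ) - (m : ℤ) * k) * fkm m b n k := by
  rw [fkm_eq,
    ← Finset.sum_filter_add_sum_filter_not (plc b (n+1) (k+1))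
      (fun F => ∀ c ∈ F, c.2 ≤ n) (wtm m)]
  have hA0 : (plc b (n+1) (k+1)).filter (fun F => ∀ c ∈ F, c.2 ≤ n) = plc b n (k+1) := by
    ext F
    simp only [Finset.mem_filter, mem_plc]
    constructor
    · rintro ⟨⟨hsub, hinj, hcard⟩, hcol⟩
      refine ⟨fun c hc => ?_, hinj, hcard⟩
      have h := mem_cells.mp (hsub hc)
      exact mem_cells.mpr ⟨h.1, h.2.1, h.2.2.1, hcol c hc⟩
    · rintro ⟨hsub, hinj, hcard⟩
      refine ⟨⟨fun c hc => ?_, hinj, hcard⟩, fun c hc => (mem_cells.mp (hsub hc)).2.2.2⟩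
      have h := mem_cells.mp (hsub hc)
      exact mem_cells.mpr ⟨h.1, h.2.1, h.2.2.1, le_trans h.2.2.2 (Nat.le_succ n)⟩
  have hA1 : (plc b (n+1) (k+1)).filter (fun F => ¬ ∀ c ∈ F, c.2 ≤ n)
      = ((plc b n k) ×ˢ Finset.Icc 1 (b (n+1))).image (fun p => insert (p.2, n+1) p.1) := by
    ext G
    simp only [Finset.mem_filter, Finset.mem_image, Finset.mem_product]
    constructor
    · rintro ⟨hG, hne⟩
      obtain ⟨hsub, hinj, hcard⟩ := mem_plc.mp hG
      push_neg at hne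
      obtain ⟨c₀, hc₀, hc₀n⟩ := hne
      have hc₀cell := mem_cells.mp (hsub hc₀)
      have hc₀col : c₀.2 = n + 1 := le_antisymm hc₀cell.2.2.2 hc₀n
      refine ⟨(G.erase c₀, c₀.1), ⟨?_, ?_⟩, ?_⟩
      · rw [mem_plc]
        refine ⟨fun c hc => ?_, fun c hc c' hc' h =>
          hinj c (Finset.mem_of_mem_erase hc) c' (Finset.mem_of_mem_erase hc') h, ?_⟩
        · have hcG := Finset.mem_of_mem_erase hc
          have h := mem_cells.mp (hsub hcG)
          refine mem_cells.mpr ⟨h.1, h.2.1, h.2.2.1, ?_⟩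
          by_cases h' : c.2 = n + 1
          · exact absurd (hinj c hcG c₀ hc₀ (h'.trans hc₀col.symm)) (Finset.ne_of_mem_erase hc)
          · have := h.2.2.2; omega
        · simp [Finset.card_erase_of_mem hc₀, hcard]
      · exact Finset.mem_Icc.mpr ⟨hc₀cell.1, hc₀col ▸ hc₀cell.2.1⟩
      · have : (c₀.1, n + 1) = c₀ := by
          rw [← hc₀col]
        rw [this, Finset.insert_erase hc₀]
    · rintro ⟨⟨F, i⟩, ⟨hF, hi⟩, rfl⟩
      obtain ⟨hsub, hinj, hcard⟩ := mem_plc.mp hF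
      obtain ⟨hi1, hi2⟩ := Finset.mem_Icc.mp hi
      have hcol : ∀ c ∈ F, c.2 ≤ n := fun c hc => (mem_cells.mp (hsub hc)).2.2.2
      have hnotmem : (i, n+1) ∉ F := fun h => by
        have := hcol _ h; simp at this
      refine ⟨mem_plc.mpr ⟨?_, ?_, ?_⟩, ?_⟩
      · intro c hc
        rcases Finset.mem_insert.mp hc with rfl | hc
        · exact mem_cells.mpr ⟨hi1, hi2, Nat.succ_le_succ (Nat.zero_le n), le_refl _⟩
        · have h := mem_cells.mp (hsub hc)
          exact mem_cells.mpr ⟨h.1, h.2.1, h.2.2.1, le_trans h.2.2.2 (Nat.le_succ n)⟩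
      · intro c hc c' hc' h
        rcases Finset.mem_insert.mp hc with rfl | hc <;>
          rcases Finset.mem_insert.mp hc' with rfl | hc'
        · rfl
        · exfalso
          have h2 := hcol c' hc'
          have h3 : n + 1 = c'.2 := h
          omega
        · exfalso
          have h2 := hcol c hc
          have h3 : c.2 = n + 1 := h
          omega
        · exact hinj c hc c' hc' h
      · rw [Finset.card_insert_of_notMem hnotmem, hcard]
      · intro hall
        have := hall (i, n+1) (Finset.mem_insert_self _ _)
        simp at this
  rw [hA0, hA1, ← fkm_eq]
  congr 1
  rw [Finset.sum_image ?hinj]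
  case hinj =>
    rintro ⟨F, i⟩ hFi ⟨F', i'⟩ hFi' hE
    simp only [Finset.mem_coe, Finset.mem_product] at hFi hFi' hE
    have hcolF : ∀ c ∈ F, c.2 ≤ n := fun c hc =>
      (mem_cells.mp ((mem_plc.mp hFi.1).1 hc)).2.2.2
    have hcolF' : ∀ c ∈ F', c.2 ≤ n := fun c hc =>
      (mem_cells.mp ((mem_plc.mp hFi'.1).1 hc)).2.2.2
    have hFF : F = F' := by
      ext c
      constructor
      · intro hc
        have : c ∈ insert ((i' : ℕ), n+1) F' := hE ▸ Finset.mem_insert_of_mem hc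
        rcases Finset.mem_insert.mp this with rfl | h
        · exact absurd (hcolF _ hc) (by simp)
        · exact h
      · intro hc
        have : c ∈ insert ((i : ℕ), n+1) F := hE ▸ Finset.mem_insert_of_mem hc
        rcases Finset.mem_insert.mp this with rfl | h
        · exact absurd (hcolF' _ hc) (by simp)
        · exact h
    have hii : i = i' := by
      have : ((i : ℕ), n+1) ∈ insert ((i' : ℕ), n+1) F' :=
        hE ▸ Finset.mem_insert_self _ _
      rcases Finset.mem_insert.mp this with h | h
      · exact (Prod.mk.injEq _ _ _ _ ▸ h).1
      · exact absurd (hcolF' _ h) (by simp)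
    rw [hFF, hii]
  rw [Finset.sum_product, fkm_eq, Finset.mul_sum]
  refine Finset.sum_congr rfl (fun F hF => ?_)
  obtain ⟨hsub, hinj, hcard⟩ := mem_plc.mp hF
  have hjF : ∀ c ∈ F, c.2 ≠ n + 1 := fun c hc h => by
    have := (mem_cells.mp (hsub hc)).2.2.2; omega
  have hfib : F.card = ∑ i ∈ Finset.Icc 1 (b (n+1)), (F.filter fun c => c.1 = i).card :=
    Finset.card_eq_sum_card_fiberwise (fun c hc => by
      have h := mem_cells.mp (hsub hc)
      exact Finset.mem_Icc.mpr ⟨h.1, le_trans h.2.1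
        (hmono c.2 (n+1) h.2.2.1 (le_trans h.2.2.2 (Nat.le_succ n)) (le_refl _))⟩)
  calc ∑ i ∈ Finset.Icc 1 (b (n+1)), wtm m (insert (i, n+1) F)
      = ∑ i ∈ Finset.Icc 1 (b (n+1)),
          wtm m F * (1 - (m : ℤ) * ((F.filter fun c => c.1 = i).card)) :=
        Finset.sum_congr rfl (fun i _ => wtm_insert hjF)
    _ = wtm m F * ∑ i ∈ Finset.Icc 1 (b (n+1)),
          (1 - (m : ℤ) * ((F.filter fun c => c.1 = i).card)) := by
        rw [Finset.mul_sum]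
    _ = ((b (n+1) : ℤ) - (m : ℤ) * k) * wtm m F := by
        rw [mul_comm]
        congr 1
        rw [Finset.sum_sub_distrib, Finset.sum_const, ← Finset.mul_sum,
          ← Nat.cast_sum, ← hfib, hcard]
        simp [Nat.card_Icc, mul_comm]

end MWF

/-- The `m`-weight Factorization Theorem (Theorem 6.1): for any Ferrers board
`B = (b_1,…,b_n)`, `∑_k f_{k,m}(B) x↓_{n-k,m} = ∏_{j=1}^n (x + b_j − (j−1)m)`. -/
theorem m_weight_factorization (m n : ℕ) (hm : 0 < m) (b : ℕ → ℕ)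
    (hmono : ∀ j k, 1 ≤ j → j ≤ k → k ≤ n → b j ≤ b k) (x : ℤ) :
    ∑ k ∈ Finset.range (n + 1), fkm m b n k * fallFact x (n - k) m =
      ∏ j ∈ Finset.Icc 1 n, (x + (b j : ℤ) - (m : ℤ) * ((j : ℤ) - 1)) := by
  clear hm
  revert hmono
  induction n with
  | zero =>
    intro _
    simp [MWF.fkm_zero, fallFact, Finset.Icc_eq_empty (show ¬(1:ℕ) ≤ 0 by omega)]
  | succ n ih =>
    intro hmono
    have hmono' : ∀ j k, 1 ≤ j → j ≤ k → k ≤ n → b j ≤ b k :=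
      fun j k h1 h2 h3 => hmono j k h1 h2 (le_trans h3 (Nat.le_succ n))
    have IH := ih hmono'
    rw [Finset.sum_range_succ']
    have e1 : ∀ k ∈ Finset.range (n+1),
        fkm m b (n+1) (k+1) * fallFact x (n+1-(k+1)) m
        = fkm m b n (k+1) * fallFact x (n-k) m
          + ((b (n+1) : ℤ) - (m:ℤ)*k) * (fkm m b n k * fallFact x (n-k) m) := by
      intro k hk
      have hs : n + 1 - (k+1) = n - k := by omega
      rw [hs, MWF.fkm_succ m b n k hmono]
      ring
    rw [Finset.sum_congr rfl e1, Finset.sum_add_distrib]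
    have e2 : (∑ k ∈ Finset.range (n+1), fkm m b n (k+1) * fallFact x (n-k) m)
        + fallFact x (n+1) m
        = ∑ k ∈ Finset.range (n+1), fkm m b n k * fallFact x (n+1-k) m := by
      have h := Finset.sum_range_succ' (fun k => fkm m b n k * fallFact x (n+1-k) m) (n+1)
      rw [Finset.sum_range_succ] at h
      simp only [MWF.fkm_eq_zero (Nat.lt_succ_self n), zero_mul, add_zero,
        MWF.fkm_zero, one_mul, Nat.sub_zero, Nat.add_sub_add_right] at h
      exact h.symm
    have e3 : (∑ k ∈ Finset.range (n+1), fkm m b n k * fallFact x (n-k) m)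
          * (x + (b (n+1) : ℤ) - (m:ℤ) * n)
        = (∑ k ∈ Finset.range (n+1), fkm m b n k * fallFact x (n+1-k) m)
          + ∑ k ∈ Finset.range (n+1),
              ((b (n+1) : ℤ) - (m:ℤ)*k) * (fkm m b n k * fallFact x (n-k) m) := by
      rw [Finset.sum_mul, ← Finset.sum_add_distrib]
      refine Finset.sum_congr rfl (fun k hk => ?_)
      have hk' : k ≤ n := Nat.lt_succ_iff.mp (Finset.mem_range.mp hk)
      have h1 : n + 1 - k = (n - k) + 1 := by omega
      rw [h1, MWF.fallFact_succ, Nat.cast_sub hk']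
      ring
    rw [MWF.fkm_zero, one_mul, Nat.sub_zero,
      Finset.prod_Icc_succ_top (Nat.succ_le_succ (Nat.zero_le n)), ← IH,
      show ((↑(n+1):ℤ) - 1) = (n:ℤ) by push_cast; ring]
    linarith [e2, e3]
end

section
/- For any positive integer m: (i) if B is an m-restricted Ferrers board then l(B) is m-increasing; (ii) if B is an m-increasing Ferrers board then l(B) is m-restricted; (iii) if B is a singleton board then l(l(B)) = B, so l is an involution on singleton boards. -/
/-- `t`: the largest index with `l_t ≠ 0` (0 if the board is empty). -/
def tIdx (m : ℕ) (b : ℕ → ℕ) (n : ℕ) : ℕ :=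
  (Finset.Icc 1 ((Finset.Icc 1 n).sup b)).sup fun i => if lvlCount m b n i ≠ 0 then i else 0

/-- The board `l(B) = (l_t, l_{t−1}, …, l_1)`. -/
def lOp (m : ℕ) (b : ℕ → ℕ) (n : ℕ) : ℕ → ℕ :=
  fun j => if 1 ≤ j ∧ j ≤ tIdx m b n then lvlCount m b n (tIdx m b n + 1 - j) else 0

namespace LOPaux
open Finset

lemma imul {i : ℕ} (m : ℕ) (hi : 1 ≤ i) : i * m = (i-1)*m + m := by
  obtain ⟨s, rfl⟩ : ∃ s, i = s + 1 := ⟨i - 1, by omega⟩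
  simp [Nat.succ_mul]

variable {m n : ℕ} {b : ℕ → ℕ}

lemma term_le {i : ℕ} (x : ℕ) (hi : 1 ≤ i) :
    min x (i*m) - min x ((i-1)*m) ≤ m := by
  have := imul m hi; omega

lemma lvl_le_nm {i : ℕ} (hi : 1 ≤ i) : lvlCount m b n i ≤ n * m := by
  have : lvlCount m b n i ≤ ∑ _j ∈ Finset.Icc 1 n, m :=
    Finset.sum_le_sum (fun j _ => term_le (b j) hi)
  simpa [Nat.card_Icc] using this

lemma lvl_anti {i : ℕ} (hi : 1 ≤ i) : lvlCount m b n (i+1) ≤ lvlCount m b n i := by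
  apply Finset.sum_le_sum
  intro j _
  have h1 := imul (i := i) m hi
  have h2 : (i+1)*m = i*m + m := by ring
  have h3 : (i+1) - 1 = i := by omega
  rw [h3]; omega

lemma lvl_anti' {i k : ℕ} (hi : 1 ≤ i) (hik : i ≤ k) :
    lvlCount m b n k ≤ lvlCount m b n i := by
  induction k, hik using Nat.le_induction with
  | base => exact le_rfl
  | succ k hk ih => exact le_trans (lvl_anti (by omega)) ih

lemma lvl_tIdx_ne (h : 1 ≤ tIdx m b n) : lvlCount m b n (tIdx m b n) ≠ 0 := by
  set M := (Finset.Icc 1 n).sup b with hM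
  have hne : (Finset.Icc 1 M).Nonempty := by
    rcases Nat.eq_zero_or_pos M with h0 | h0
    · exfalso
      have : tIdx m b n = 0 := by
        rw [tIdx, ← hM, h0]
        simp
      omega
    · exact ⟨1, by simp [Finset.mem_Icc]; omega⟩
  obtain ⟨i, _, hieq⟩ := Finset.exists_mem_eq_sup (Finset.Icc 1 M)
    hne (fun i => if lvlCount m b n i ≠ 0 then i else 0)
  have : tIdx m b n = if lvlCount m b n i ≠ 0 then i else 0 := hieq
  by_cases hc : lvlCount m b n i ≠ 0
  · rw [if_pos hc] at this; rw [this]; exact hc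
  · rw [if_neg hc] at this; omega

lemma lvl_pos_of_le_tIdx {i : ℕ} (hi : 1 ≤ i) (hit : i ≤ tIdx m b n) :
    lvlCount m b n i ≠ 0 := by
  have h1 := lvl_tIdx_ne (le_trans hi hit)
  have h2 := lvl_anti' (m := m) (b := b) (n := n) hi hit
  omega

lemma le_tIdx {i : ℕ} (hi1 : 1 ≤ i) (hi2 : i ≤ (Finset.Icc 1 n).sup b)
    (h : lvlCount m b n i ≠ 0) : i ≤ tIdx m b n := by
  have hmem : i ∈ Finset.Icc 1 ((Finset.Icc 1 n).sup b) := Finset.mem_Icc.2 ⟨hi1, hi2⟩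
  have := Finset.le_sup (f := fun i => if lvlCount m b n i ≠ 0 then i else 0) hmem
  simpa [tIdx, h] using this

lemma tIdx_pos_n (h : 1 ≤ tIdx m b n) : 1 ≤ n := by
  by_contra hn
  have : n = 0 := by omega
  subst this
  have : tIdx m b 0 = 0 := by simp [tIdx]
  omega

lemma bn_le_tm (hm : 0 < m) (hn : 1 ≤ n) : b n ≤ tIdx m b n * m := by
  by_contra hcon
  push_neg at hcon
  set t := tIdx m b n with ht
  have hterm : 0 < min (b n) ((t+1)*m) - min (b n) (((t+1)-1)*m) := by
    have h2 : (t+1)*m = t*m + m := by ring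
    have h3 : (t+1) - 1 = t := by omega
    rw [h3]; omega
  have hlvl : lvlCount m b n (t+1) ≠ 0 := by
    intro h0
    rw [lvlCount, Finset.sum_eq_zero_iff] at h0
    have := h0 n (by simp [Finset.mem_Icc]; omega)
    omega
  have hsup : b n ≤ (Finset.Icc 1 n).sup b :=
    Finset.le_sup (f := b) (by simp [Finset.mem_Icc]; omega)
  have : t + 1 ≤ t := le_tIdx (by omega) (by
    have : t + 1 ≤ b n := by nlinarith
    omega) hlvl
  omega


def dd (m : ℕ) (b : ℕ → ℕ) (i j : ℕ) : ℕ :=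
  (min (b j) (i*m) - min (b j) ((i-1)*m)) - (min (b j) ((i+1)*m) - min (b j) (i*m))

lemma lvl_split {i : ℕ} (hi : 1 ≤ i) :
    lvlCount m b n i = lvlCount m b n (i+1) + ∑ j ∈ Finset.Icc 1 n, dd m b i j := by
  rw [lvlCount, lvlCount, ← Finset.sum_add_distrib]
  apply Finset.sum_congr rfl
  intro j _
  have h1 := imul (i := i) m hi
  have h3 : (i+1) - 1 = i := by omega
  have h2 : (i+1)*m = i*m + m := by ring
  simp only [dd, h3]
  omega

lemma part_i (hm : 0 < m) (hb1 : 1 ≤ n → b 1 ≤ m)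
    (hres : ∀ j, 1 ≤ j → j < n → b (j + 1) ≤ b j + m) {i : ℕ}
    (hi : 1 ≤ i) (hit : i + 1 ≤ tIdx m b n) :
    lvlCount m b n (i+1) + m ≤ lvlCount m b n i := by
  have hn : 1 ≤ n := tIdx_pos_n (le_trans (by omega) hit)
  have hlvl := lvl_pos_of_le_tIdx (m := m) (b := b) (n := n) (i := i+1) (by omega) hit
  have hS : ∃ j ∈ Finset.Icc 1 n, i*m < b j := by
    by_contra hc; push_neg at hc
    apply hlvl
    rw [lvlCount]; apply Finset.sum_eq_zero
    intro j hj
    have := hc j hj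
    have h3 : (i+1)-1 = i := by omega
    have h2 : (i+1)*m = i*m + m := by ring
    rw [h3]; omega
  set S := (Finset.Icc 1 n).filter (fun j => i*m < b j) with hSdef
  have hSne : S.Nonempty := by
    obtain ⟨j, hj1, hj2⟩ := hS; exact ⟨j, Finset.mem_filter.2 ⟨hj1, hj2⟩⟩
  set j0 := S.min' hSne with hj0
  have hj0S : j0 ∈ S := S.min'_mem hSne
  rw [hSdef] at hj0S
  have hj0b : i*m < b j0 := (Finset.mem_filter.1 hj0S).2
  have hj0I : 1 ≤ j0 ∧ j0 ≤ n := Finset.mem_Icc.1 (Finset.mem_filter.1 hj0S).1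
  have hb1' : b 1 ≤ i*m := le_trans (hb1 hn) (by nlinarith)
  have hj0ge2 : 2 ≤ j0 := by
    rcases Nat.lt_or_ge j0 2 with h | h
    · exfalso
      have : j0 = 1 := by omega
      rw [this] at hj0b; omega
    · exact h
  have hj0m1 : b (j0-1) ≤ i*m := by
    by_contra h; push_neg at h
    have hmem : j0 - 1 ∈ S := by
      rw [hSdef]
      exact Finset.mem_filter.2 ⟨Finset.mem_Icc.2 ⟨by omega, by omega⟩, h⟩
    have := S.min'_le _ hmem
    omega
  have hstep : b j0 ≤ b (j0-1) + m := by
    have h := hres (j0-1) (by omega) (by omega)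
    have e : j0 - 1 + 1 = j0 := by omega
    rwa [e] at h
  rw [lvl_split hi]
  have key : m ≤ ∑ j ∈ Finset.Icc 1 n, dd m b i j := by
    have hsub : ({j0 - 1, j0} : Finset ℕ) ⊆ Finset.Icc 1 n := by
      intro x hx
      simp only [Finset.mem_insert, Finset.mem_singleton] at hx
      rcases hx with h | h <;> (subst h; exact Finset.mem_Icc.2 ⟨by omega, by omega⟩)
    have hpair : ∑ j ∈ ({j0-1, j0} : Finset ℕ), dd m b i j = dd m b i (j0-1) + dd m b i j0 :=
      Finset.sum_pair (by omega)
    have hge := Finset.sum_le_sum_of_subset hsub (f := dd m b i)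
    have hval : m ≤ dd m b i (j0-1) + dd m b i j0 := by
      have h1 := imul (i := i) m hi
      have h2 : (i+1)*m = i*m + m := by ring
      simp only [dd]
      omega
    omega
  omega

lemma chain (hinc : ∀ j, 1 ≤ j → j < n → b j + m ≤ b (j+1)) :
    ∀ j k, 1 ≤ j → j ≤ k → k ≤ n → b j + (k - j) * m ≤ b k := by
  intro j k hj hjk
  induction k, hjk using Nat.le_induction with
  | base => intro _; simp
  | succ k hk ih =>
    intro hkn
    have h1 := hinc k (by omega) (by omega)
    have h2 := ih (by omega)
    have h3 : (k+1-j)*m = (k-j)*m + m := by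
      have e : k+1-j = (k-j)+1 := by omega
      rw [e, Nat.succ_mul]
    omega

lemma part_ii_top (hm : 0 < m) (hmono : ∀ j k, 1 ≤ j → j ≤ k → k ≤ n → b j ≤ b k)
    (hinc : ∀ j, 1 ≤ j → j < n → b j + m ≤ b (j+1)) (ht : 1 ≤ tIdx m b n) :
    lvlCount m b n (tIdx m b n) ≤ m := by
  set t := tIdx m b n with htdef
  have hn : 1 ≤ n := tIdx_pos_n ht
  have hbn : b n ≤ t * m := bn_le_tm hm hn
  have h1 := imul (i := t) m ht
  calc lvlCount m b n t ≤ ∑ j ∈ Finset.Icc 1 n, (if j = n then m else 0) := by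
        apply Finset.sum_le_sum
        intro j hj
        by_cases hjn : j = n
        · rw [if_pos hjn]; exact term_le _ ht
        · rw [if_neg hjn]
          have hj' := Finset.mem_Icc.1 hj
          have hjb : b j ≤ (t-1)*m := by
            by_contra hc; push_neg at hc
            have h2 := hinc j (by omega) (by omega)
            have h3 := hmono (j+1) n (by omega) (by omega) le_rfl
            omega
          omega
    _ = m := by
        rw [Finset.sum_ite_eq' (Finset.Icc 1 n) n (fun _ => m)]
        simp [Finset.mem_Icc, hn]

lemma part_ii (hm : 0 < m) (hinc : ∀ j, 1 ≤ j → j < n → b j + m ≤ b (j+1)) {i : ℕ}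
    (hi : 1 ≤ i) (hit : i + 1 ≤ tIdx m b n) :
    lvlCount m b n i ≤ lvlCount m b n (i+1) + m := by
  have hn : 1 ≤ n := tIdx_pos_n (le_trans (by omega) hit)
  have hlvl := lvl_pos_of_le_tIdx (m := m) (b := b) (n := n) (i := i) hi (by omega)
  have h1 := imul (i := i) m hi
  have h2 : (i+1)*m = i*m + m := by ring
  have hS : ∃ j ∈ Finset.Icc 1 n, (i-1)*m < b j := by
    by_contra hc; push_neg at hc
    apply hlvl; rw [lvlCount]; apply Finset.sum_eq_zero
    intro j hj
    have := hc j hj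
    omega
  set S := (Finset.Icc 1 n).filter (fun j => (i-1)*m < b j) with hSdef
  have hSne : S.Nonempty := by
    obtain ⟨j, hj1, hj2⟩ := hS; exact ⟨j, Finset.mem_filter.2 ⟨hj1, hj2⟩⟩
  set j1 := S.min' hSne with hj1def
  have hj1S : j1 ∈ S := S.min'_mem hSne
  rw [hSdef] at hj1S
  have hj1b : (i-1)*m < b j1 := (Finset.mem_filter.1 hj1S).2
  have hj1I : 1 ≤ j1 ∧ j1 ≤ n := Finset.mem_Icc.1 (Finset.mem_filter.1 hj1S).1
  rw [lvl_split hi]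
  have key : ∑ j ∈ Finset.Icc 1 n, dd m b i j ≤ m := by
    have hub : ∀ j ∈ Finset.Icc 1 n, dd m b i j ≤
        (if j = j1 then dd m b i j1 else 0) + (if j = j1+1 then dd m b i (j1+1) else 0) := by
      intro j hj
      by_cases e1 : j = j1
      · simp [e1]
      by_cases e2 : j = j1 + 1
      · simp [e1, e2]
      have hj' := Finset.mem_Icc.1 hj
      rw [if_neg e1, if_neg e2]
      rcases Nat.lt_or_ge j j1 with hlt | hge
      · have hnotS : ¬ ((i-1)*m < b j) := by
          intro hcc
          have hmem : j ∈ S := by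
            rw [hSdef]; exact Finset.mem_filter.2 ⟨hj, hcc⟩
          have := S.min'_le _ hmem
          omega
        simp only [dd]
        omega
      · have hgt : j1 + 2 ≤ j := by omega
        have hch := chain hinc j1 j hj1I.1 (by omega) hj'.2
        have hmm : 2*m ≤ (j - j1)*m := Nat.mul_le_mul_right m (by omega)
        simp only [dd]
        omega
    calc ∑ j ∈ Finset.Icc 1 n, dd m b i j
        ≤ ∑ j ∈ Finset.Icc 1 n, ((if j = j1 then dd m b i j1 else 0) +
            (if j = j1+1 then dd m b i (j1+1) else 0)) := Finset.sum_le_sum hub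
      _ = dd m b i j1 + (if j1+1 ∈ Finset.Icc 1 n then dd m b i (j1+1) else 0) := by
          rw [Finset.sum_add_distrib, Finset.sum_ite_eq' (Finset.Icc 1 n) j1 (fun _ => dd m b i j1),
            Finset.sum_ite_eq' (Finset.Icc 1 n) (j1+1) (fun _ => dd m b i (j1+1))]
          rw [if_pos (Finset.mem_Icc.2 ⟨by omega, by omega⟩)]
      _ ≤ m := by
          by_cases hcase : j1 + 1 ≤ n
          · rw [if_pos (Finset.mem_Icc.2 ⟨by omega, hcase⟩)]
            have hstep := hinc j1 hj1I.1 (by omega)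
            simp only [dd]
            omega
          · rw [if_neg (by simp [Finset.mem_Icc]; omega)]
            simp only [dd]
            omega
  omega


def AA (m : ℕ) (b : ℕ → ℕ) (n i : ℕ) : ℕ :=
  ((Finset.Icc 1 n).filter (fun j => i*m ≤ b j)).card

def rr (m : ℕ) (b : ℕ → ℕ) (n i : ℕ) : ℕ :=
  ∑ j ∈ (Finset.Icc 1 n).filter (fun j => (i-1)*m < b j ∧ b j < i*m), (b j - (i-1)*m)

lemma decomp {i : ℕ} (hi : 1 ≤ i) :
    lvlCount m b n i = m * AA m b n i + rr m b n i := by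
  have hcard : m * AA m b n i
      = ∑ j ∈ Finset.Icc 1 n, (if i*m ≤ b j then m else 0) := by
    rw [AA, ← Finset.sum_filter, Finset.sum_const, smul_eq_mul, mul_comm]
  rw [hcard, rr, Finset.sum_filter, lvlCount, ← Finset.sum_add_distrib]
  apply Finset.sum_congr rfl
  intro j _
  have h1 := imul (i := i) m hi
  split_ifs <;> omega

lemma not_dvd_between {i x : ℕ} (h1 : (i-1)*m < x) (h2 : x < i*m) : ¬ m ∣ x := by
  rintro ⟨c, rfl⟩
  have hgt : i - 1 < c := by
    by_contra h; push_neg at h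
    have h3 : m * c ≤ m * (i-1) := Nat.mul_le_mul_left m h
    have h4 : m * (i-1) = (i-1) * m := mul_comm _ _
    omega
  have h5 : m * i ≤ m * c := Nat.mul_le_mul_left m (by omega)
  have h6 : m * i = i * m := mul_comm _ _
  omega

lemma div_eq_of_between {i x : ℕ} (hi : 1 ≤ i) (h1 : (i-1)*m < x) (h2 : x < i*m) :
    x / m = i - 1 := by
  apply Nat.div_eq_of_lt_le (le_of_lt h1)
  have e : (i - 1 + 1) = i := by omega
  rw [e]; exact h2

lemma jump (hm : 0 < m) (hsing : IsSingletonBoard m b n) {i j : ℕ} (hi : 1 ≤ i)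
    (hj : 1 ≤ j) (hjn : j < n) (h1 : (i-1)*m < b j) (h2 : b j < i*m) :
    i*m ≤ b (j+1) := by
  have hnd : ¬ m ∣ b j := not_dvd_between h1 h2
  have hd : b j / m = i - 1 := div_eq_of_between hi h1 h2
  have hs := hsing j hj hjn hnd
  rw [hd] at hs
  have h3 : i ≤ b (j+1) / m := by
    have := Nat.lt_of_mul_lt_mul_left hs
    omega
  calc i*m = m*i := mul_comm _ _
    _ ≤ m * (b (j+1)/m) := Nat.mul_le_mul_left m h3
    _ ≤ b (j+1) := Nat.mul_div_le _ m

lemma partial_unique (hm : 0 < m) (hsing : IsSingletonBoard m b n)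
    (hmono : ∀ j k, 1 ≤ j → j ≤ k → k ≤ n → b j ≤ b k) {i : ℕ} (hi : 1 ≤ i) :
    ∀ x ∈ (Finset.Icc 1 n).filter (fun j => (i-1)*m < b j ∧ b j < i*m),
    ∀ y ∈ (Finset.Icc 1 n).filter (fun j => (i-1)*m < b j ∧ b j < i*m), x = y := by
  have key : ∀ x y, x ∈ (Finset.Icc 1 n).filter (fun j => (i-1)*m < b j ∧ b j < i*m) →
      y ∈ (Finset.Icc 1 n).filter (fun j => (i-1)*m < b j ∧ b j < i*m) → x < y → False := by
    intro x y hx hy hxy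
    obtain ⟨hxI, hx1, hx2⟩ := Finset.mem_filter.1 hx
    obtain ⟨hyI, hy1, hy2⟩ := Finset.mem_filter.1 hy
    obtain ⟨hxa, hxb⟩ := Finset.mem_Icc.1 hxI
    obtain ⟨hya, hyb⟩ := Finset.mem_Icc.1 hyI
    have h3 := jump hm hsing hi hxa (by omega) hx1 hx2
    have h4 : b (x+1) ≤ b y := hmono (x+1) y (by omega) (by omega) hyb
    omega
  intro x hx y hy
  rcases Nat.lt_trichotomy x y with h | h | h
  · exact absurd (key x y hx hy h) (by simp)
  · exact h
  · exact absurd (key y x hy hx h) (by simp)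

lemma rr_lt (hm : 0 < m) (hsing : IsSingletonBoard m b n)
    (hmono : ∀ j k, 1 ≤ j → j ≤ k → k ≤ n → b j ≤ b k) {i : ℕ} (hi : 1 ≤ i) :
    rr m b n i < m := by
  rcases ((Finset.Icc 1 n).filter (fun j => (i-1)*m < b j ∧ b j < i*m)).eq_empty_or_nonempty
    with he | ⟨a, ha⟩
  · rw [rr, he]; simpa using hm
  · have hPa : (Finset.Icc 1 n).filter (fun j => (i-1)*m < b j ∧ b j < i*m) = {a} :=
      Finset.eq_singleton_iff_unique_mem.2
        ⟨ha, fun x hx => partial_unique hm hsing hmono hi x hx a ha⟩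
    rw [rr, hPa, Finset.sum_singleton]
    obtain ⟨_, h1, h2⟩ := Finset.mem_filter.1 ha
    have h3 := imul (i := i) m hi
    omega

lemma A_ge_iff (hmono : ∀ j k, 1 ≤ j → j ≤ k → k ≤ n → b j ≤ b k) {i k : ℕ}
    (hk1 : 1 ≤ k) (hkn : k ≤ n) :
    k ≤ AA m b n i ↔ i*m ≤ b (n+1-k) := by
  constructor
  · intro h
    by_contra hc; push_neg at hc
    have hsub : (Finset.Icc 1 n).filter (fun j => i*m ≤ b j) ⊆ Finset.Icc (n+2-k) n := by
      intro j hj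
      obtain ⟨hj1, hj2⟩ := Finset.mem_filter.1 hj
      obtain ⟨hja, hjb⟩ := Finset.mem_Icc.1 hj1
      refine Finset.mem_Icc.2 ⟨?_, hjb⟩
      by_contra hcc; push_neg at hcc
      have : b j ≤ b (n+1-k) := hmono j (n+1-k) hja (by omega) (by omega)
      omega
    have hcard := Finset.card_le_card hsub
    rw [Nat.card_Icc] at hcard
    rw [AA] at h
    omega
  · intro h
    have hsub : Finset.Icc (n+1-k) n ⊆ (Finset.Icc 1 n).filter (fun j => i*m ≤ b j) := by
      intro j hj
      obtain ⟨hja, hjb⟩ := Finset.mem_Icc.1 hj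
      refine Finset.mem_filter.2 ⟨Finset.mem_Icc.2 ⟨by omega, hjb⟩, ?_⟩
      exact le_trans h (hmono (n+1-k) j (by omega) hja hjb)
    have hcard := Finset.card_le_card hsub
    rw [Nat.card_Icc] at hcard
    rw [AA]
    omega

lemma fk_split {k c a r0 : ℕ} (hk : 1 ≤ k) (hc : c = m * a + r0) (hr : r0 < m) :
    min c (k*m) - min c ((k-1)*m)
      = (if k ≤ a then m else 0) + (if a = k - 1 then r0 else 0) := by
  have h1 := imul (i := k) m hk
  rcases Nat.lt_trichotomy a (k-1) with h | h | h
  · rw [if_neg (by omega), if_neg (by omega)]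
    have h2 : m * (a+1) ≤ m * (k-1) := Nat.mul_le_mul_left m (by omega)
    have h3 : m * (a+1) = m*a + m := by ring
    have h4 : m * (k-1) = (k-1)*m := mul_comm _ _
    omega
  · rw [if_neg (by omega), if_pos h]
    have h2 : m * a = (k-1) * m := by rw [h, mul_comm]
    omega
  · rw [if_pos (by omega), if_neg (by omega)]
    have h2 : m * k ≤ m * a := Nat.mul_le_mul_left m (by omega)
    have h3 : m * k = k * m := mul_comm _ _
    omega

lemma sum_reflect (g : ℕ → ℕ) (t : ℕ) :
    ∑ j ∈ Finset.Icc 1 t, g (t+1-j) = ∑ j ∈ Finset.Icc 1 t, g j := by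
  refine Finset.sum_nbij' (fun j => t+1-j) (fun j => t+1-j) ?_ ?_ ?_ ?_ ?_ <;>
    intro a ha <;> simp only [Finset.mem_Icc] at * <;> omega

lemma partial_mem_eq_p (hm : 0 < m) (hmono : ∀ j k, 1 ≤ j → j ≤ k → k ≤ n → b j ≤ b k)
    (hsing : IsSingletonBoard m b n) {i k : ℕ}
    (hi : 1 ≤ i) (hk : 1 ≤ k) (hkn : k ≤ n) (hA : AA m b n i = k-1) {j : ℕ}
    (hj : j ∈ (Finset.Icc 1 n).filter (fun j => (i-1)*m < b j ∧ b j < i*m)) :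
    j = n+1-k := by
  obtain ⟨hjI, hj1, hj2⟩ := Finset.mem_filter.1 hj
  obtain ⟨hja, hjb⟩ := Finset.mem_Icc.1 hjI
  have hbpi : b (n+1-k) < i*m := by
    by_contra hc; push_neg at hc
    have := (A_ge_iff hmono hk hkn).2 hc
    omega
  have hjp : j ≤ n+1-k := by
    by_contra hc; push_neg at hc
    have hk2 : 2 ≤ k := by omega
    have hA1 : k-1 ≤ AA m b n i := by omega
    have h6 := (A_ge_iff hmono (i := i) (k := k-1) (by omega) (by omega)).1 hA1
    have he : n+1-(k-1) = (n+1-k)+1 := by omega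
    rw [he] at h6
    have h7 : b ((n+1-k)+1) ≤ b j := hmono ((n+1-k)+1) j (by omega) (by omega) hjb
    omega
  rcases eq_or_lt_of_le hjp with he | hjlt
  · exact he
  · exfalso
    have h8 := jump hm hsing hi hja (by omega) hj1 hj2
    have h9 : b (j+1) ≤ b (n+1-k) := hmono (j+1) (n+1-k) (by omega) (by omega) (by omega)
    omega


lemma lvl_lOp_eq (hm : 0 < m) (hmono : ∀ j k, 1 ≤ j → j ≤ k → k ≤ n → b j ≤ b k)
    (hsing : IsSingletonBoard m b n)
    {k : ℕ} (hk : 1 ≤ k) (hkn : k ≤ n) :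
    ∑ i ∈ Finset.Icc 1 (tIdx m b n),
      (min (lvlCount m b n i) (k*m) - min (lvlCount m b n i) ((k-1)*m))
      = b (n+1-k) := by
  have hn : 1 ≤ n := by omega
  have hp1 : 1 ≤ n+1-k := by omega
  have hp2 : n+1-k ≤ n := by omega
  have hbn_le : b n ≤ tIdx m b n * m := bn_le_tm hm hn
  have step1 : ∀ i ∈ Finset.Icc 1 (tIdx m b n),
      (min (lvlCount m b n i) (k*m) - min (lvlCount m b n i) ((k-1)*m))
        = (if i*m ≤ b (n+1-k) then m else 0)
          + (if AA m b n i = k-1 then rr m b n i else 0) := by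
    intro i hi'
    obtain ⟨hi1, hi2⟩ := Finset.mem_Icc.1 hi'
    rw [fk_split hk (decomp hi1) (rr_lt hm hsing hmono hi1)]
    congr 1
    by_cases h : i*m ≤ b (n+1-k)
    · rw [if_pos h, if_pos ((A_ge_iff hmono hk hkn).2 h)]
    · rw [if_neg (fun hc => h ((A_ge_iff hmono hk hkn).1 hc)), if_neg h]
  rw [Finset.sum_congr rfl step1, Finset.sum_add_distrib]
  have hdiv_le : b (n+1-k) / m ≤ tIdx m b n := by
    have h0 : b (n+1-k) ≤ tIdx m b n * m := le_trans (hmono (n+1-k) n hp1 hp2 le_rfl) hbn_le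
    have h1 := Nat.div_le_div_right (c := m) h0
    rwa [Nat.mul_div_cancel _ hm] at h1
  have hFst : ∑ i ∈ Finset.Icc 1 (tIdx m b n), (if i*m ≤ b (n+1-k) then m else 0)
      = m * (b (n+1-k) / m) := by
    have hset : (Finset.Icc 1 (tIdx m b n)).filter (fun i => i*m ≤ b (n+1-k))
        = Finset.Icc 1 (b (n+1-k) / m) := by
      ext x
      simp only [Finset.mem_filter, Finset.mem_Icc]
      constructor
      · rintro ⟨⟨h1, _⟩, h3⟩
        exact ⟨h1, (Nat.le_div_iff_mul_le hm).2 h3⟩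
      · rintro ⟨h1, h2⟩
        exact ⟨⟨h1, le_trans h2 hdiv_le⟩, (Nat.le_div_iff_mul_le hm).1 h2⟩
    rw [← Finset.sum_filter, hset, Finset.sum_const, Nat.card_Icc, smul_eq_mul]
    rw [Nat.add_sub_cancel, mul_comm]
  have hSnd : ∑ i ∈ Finset.Icc 1 (tIdx m b n), (if AA m b n i = k-1 then rr m b n i else 0)
      = b (n+1-k) % m := by
    have step2 : ∀ i ∈ Finset.Icc 1 (tIdx m b n),
        (if AA m b n i = k-1 then rr m b n i else 0)
          = (if (¬ m ∣ b (n+1-k)) ∧ i = b (n+1-k) / m + 1 then b (n+1-k) % m else 0) := by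
      intro i hi'
      obtain ⟨hi1, hi2⟩ := Finset.mem_Icc.1 hi'
      have keyA : ¬ m ∣ b (n+1-k) → i = b (n+1-k) / m + 1 → AA m b n i = k - 1 := by
        intro hdvd hieq
        have hmod := Nat.div_add_mod (b (n+1-k)) m
        have hbp_lt : b (n+1-k) < i*m := by
          have e1 : i * m = m * (b (n+1-k)/m) + m := by rw [hieq]; ring
          have hslt : b (n+1-k) % m < m := Nat.mod_lt _ hm
          omega
        have hub : ¬ (k ≤ AA m b n i) := by
          intro hc
          have := (A_ge_iff hmono hk hkn).1 hc
          omega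
        by_cases hk1 : k = 1
        · omega
        · have hk2 : 2 ≤ k := by omega
          have hlb : k-1 ≤ AA m b n i := by
            apply (A_ge_iff hmono (i := i) (k := k-1) (by omega) (by omega)).2
            have he : n+1-(k-1) = (n+1-k)+1 := by omega
            rw [he]
            have hs := hsing (n+1-k) hp1 (by omega) hdvd
            have h4 : b (n+1-k) / m < b ((n+1-k)+1) / m := Nat.lt_of_mul_lt_mul_left hs
            have h5 : i ≤ b ((n+1-k)+1)/m := by omega
            calc i*m = m*i := mul_comm _ _
              _ ≤ m * (b ((n+1-k)+1)/m) := Nat.mul_le_mul_left m h5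
              _ ≤ b ((n+1-k)+1) := Nat.mul_div_le _ m
          omega
      have keyRv : ¬ m ∣ b (n+1-k) → i = b (n+1-k) / m + 1 → rr m b n i = b (n+1-k) % m := by
        intro hdvd hieq
        have hmod := Nat.div_add_mod (b (n+1-k)) m
        have hslt : b (n+1-k) % m < m := Nat.mod_lt _ hm
        have hmodpos : 0 < b (n+1-k) % m :=
          Nat.pos_of_ne_zero (fun h => hdvd (Nat.dvd_iff_mod_eq_zero.mpr h))
        have hbp_lt : b (n+1-k) < i*m := by
          have e1 : i * m = m * (b (n+1-k)/m) + m := by rw [hieq]; ring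
          omega
        have hbp_ge : (i-1)*m = m * (b (n+1-k) / m) := by
          rw [hieq]; simp [mul_comm]
        have hpmem : (n+1-k) ∈ (Finset.Icc 1 n).filter
            (fun j => (i-1)*m < b j ∧ b j < i*m) := by
          refine Finset.mem_filter.2 ⟨Finset.mem_Icc.2 ⟨hp1, hp2⟩, ?_, hbp_lt⟩
          omega
        have hsingleton : (Finset.Icc 1 n).filter (fun j => (i-1)*m < b j ∧ b j < i*m)
            = {n+1-k} :=
          Finset.eq_singleton_iff_unique_mem.2
            ⟨hpmem, fun x hx => partial_unique hm hsing hmono hi1 x hx _ hpmem⟩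
        rw [rr, hsingleton, Finset.sum_singleton]
        omega
      have keyR0 : AA m b n i = k-1 → (m ∣ b (n+1-k) ∨ i ≠ b (n+1-k) / m + 1) →
          rr m b n i = 0 := by
        intro hA hor
        apply Finset.sum_eq_zero
        intro j hj
        exfalso
        have hjeq := partial_mem_eq_p hm hmono hsing hi1 hk hkn hA hj
        obtain ⟨hjI, hj1, hj2⟩ := Finset.mem_filter.1 hj
        rw [hjeq] at hj1 hj2
        rcases hor with hdvd | hne
        · exact not_dvd_between hj1 hj2 hdvd
        · have := div_eq_of_between hi1 hj1 hj2
          omega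
      by_cases hC : (¬ m ∣ b (n+1-k)) ∧ i = b (n+1-k) / m + 1
      · rw [if_pos hC, if_pos (keyA hC.1 hC.2)]
        exact keyRv hC.1 hC.2
      · rw [if_neg hC]
        by_cases hA : AA m b n i = k-1
        · rw [if_pos hA]
          apply keyR0 hA
          by_cases hdvd : m ∣ b (n+1-k)
          · exact Or.inl hdvd
          · refine Or.inr (fun he => hC ⟨hdvd, he⟩)
        · rw [if_neg hA]
    rw [Finset.sum_congr rfl step2]
    by_cases hdvd : m ∣ b (n+1-k)
    · have hz : b (n+1-k) % m = 0 := Nat.dvd_iff_mod_eq_zero.mp hdvd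
      rw [hz]
      apply Finset.sum_eq_zero
      intro i _
      rw [if_neg (fun hc => hc.1 hdvd)]
    · have hcongr : ∀ i ∈ Finset.Icc 1 (tIdx m b n),
          (if (¬ m ∣ b (n+1-k)) ∧ i = b (n+1-k) / m + 1 then b (n+1-k) % m else 0)
            = (if i = b (n+1-k) / m + 1 then b (n+1-k) % m else 0) := by
        intro i _
        by_cases h : i = b (n+1-k) / m + 1
        · rw [if_pos ⟨hdvd, h⟩, if_pos h]
        · rw [if_neg (fun hc => h hc.2), if_neg h]
      rw [Finset.sum_congr rfl hcongr,
        Finset.sum_ite_eq' (Finset.Icc 1 (tIdx m b n)) (b (n+1-k) / m + 1)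
          (fun _ => b (n+1-k) % m)]
      have hmem : b (n+1-k) / m + 1 ∈ Finset.Icc 1 (tIdx m b n) := by
        refine Finset.mem_Icc.2 ⟨Nat.succ_le_succ (Nat.zero_le _), ?_⟩
        have hlt : b (n+1-k) < tIdx m b n * m := by
          have h0 := le_trans (hmono (n+1-k) n hp1 hp2 le_rfl) hbn_le
          have hne : b (n+1-k) ≠ tIdx m b n * m := by
            intro he
            exact hdvd (by rw [he]; exact dvd_mul_left m _)
          omega
        exact (Nat.div_lt_iff_lt_mul hm).2 hlt
      rw [if_pos hmem]
  rw [hFst, hSnd, Nat.div_add_mod]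


lemma lvl_lOp_sum (m : ℕ) (b : ℕ → ℕ) (n k : ℕ) :
    lvlCount m (lOp m b n) (tIdx m b n) k
      = ∑ i ∈ Finset.Icc 1 (tIdx m b n),
          (min (lvlCount m b n i) (k*m) - min (lvlCount m b n i) ((k-1)*m)) := by
  rw [lvlCount, ← sum_reflect
    (fun i => min (lvlCount m b n i) (k*m) - min (lvlCount m b n i) ((k-1)*m)) (tIdx m b n)]
  apply Finset.sum_congr rfl
  intro j hj
  obtain ⟨h1, h2⟩ := Finset.mem_Icc.1 hj
  rw [lOp, if_pos ⟨h1, h2⟩]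

lemma lvl_one_ge (hm : 0 < m) (hpos : ∀ j, 1 ≤ j → j ≤ n → 0 < b j) :
    n ≤ lvlCount m b n 1 := by
  calc n = ∑ _j ∈ Finset.Icc 1 n, 1 := by simp
    _ ≤ lvlCount m b n 1 := by
        apply Finset.sum_le_sum
        intro j hj
        obtain ⟨h1, h2⟩ := Finset.mem_Icc.1 hj
        have hb := hpos j h1 h2
        have e1 : 1*m = m := one_mul m
        have e2 : (1-1)*m = 0 := by norm_num
        omega

lemma tIdx_ge_one (hm : 0 < m) (hn : 1 ≤ n) (hb : 0 < b n) : 1 ≤ tIdx m b n := by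
  apply le_tIdx le_rfl
  · have := Finset.le_sup (f := b) (Finset.mem_Icc.2 ⟨hn, le_rfl⟩)
    omega
  · intro h0
    rw [lvlCount, Finset.sum_eq_zero_iff] at h0
    have := h0 n (Finset.mem_Icc.2 ⟨hn, le_rfl⟩)
    have e1 : 1*m = m := one_mul m
    have e2 : (1-1)*m = 0 := by norm_num
    omega

end LOPaux

/-- Proposition 7.4: (i) if `B` is `m`-restricted then `l(B)` is `m`-increasing;
(ii) if `B` is `m`-increasing then `l(B)` is `m`-restricted; (iii) if `B` is a
singleton board (with positive column heights) then `l(l(B)) = B`, so `l` is an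
involution on singleton boards. -/
theorem l_operator_properties (m n : ℕ) (hm : 0 < m) (b : ℕ → ℕ)
    (hmono : ∀ j k, 1 ≤ j → j ≤ k → k ≤ n → b j ≤ b k) :
    (((1 ≤ n → b 1 ≤ m) ∧ (∀ j, 1 ≤ j → j < n → b (j + 1) ≤ b j + m)) →
      ((1 ≤ tIdx m b n → 0 < lOp m b n 1) ∧
        ∀ j, 1 ≤ j → j < tIdx m b n → lOp m b n j + m ≤ lOp m b n (j + 1))) ∧
    (((1 ≤ n → 0 < b 1) ∧ (∀ j, 1 ≤ j → j < n → b j + m ≤ b (j + 1))) →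
      ((1 ≤ tIdx m b n → lOp m b n 1 ≤ m) ∧
        ∀ j, 1 ≤ j → j < tIdx m b n → lOp m b n (j + 1) ≤ lOp m b n j + m)) ∧
    ((IsSingletonBoard m b n ∧ (∀ j, 1 ≤ j → j ≤ n → 0 < b j)) →
      (tIdx m (lOp m b n) (tIdx m b n) = n ∧
        ∀ j, 1 ≤ j → j ≤ n → lOp m (lOp m b n) (tIdx m b n) j = b j)) := by
  refine ⟨?_, ?_, ?_⟩
  · rintro ⟨hb1, hres⟩
    constructor
    · intro ht
      rw [lOp, if_pos ⟨le_rfl, ht⟩]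
      have e : tIdx m b n + 1 - 1 = tIdx m b n := by omega
      rw [e]
      exact Nat.pos_of_ne_zero (LOPaux.lvl_tIdx_ne ht)
    · intro j hj1 hjlt
      rw [lOp, lOp, if_pos ⟨hj1, by omega⟩, if_pos ⟨by omega, by omega⟩]
      have e1 : tIdx m b n + 1 - (j+1) = tIdx m b n - j := by omega
      have e2 : tIdx m b n + 1 - j = (tIdx m b n - j) + 1 := by omega
      rw [e1, e2]
      exact LOPaux.part_i hm hb1 hres (by omega) (by omega)
  · rintro ⟨hb1, hinc⟩
    constructor
    · intro ht
      rw [lOp, if_pos ⟨le_rfl, ht⟩]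
      have e : tIdx m b n + 1 - 1 = tIdx m b n := by omega
      rw [e]
      exact LOPaux.part_ii_top hm hmono hinc ht
    · intro j hj1 hjlt
      rw [lOp, lOp, if_pos (⟨by omega, by omega⟩ : 1 ≤ j + 1 ∧ j + 1 ≤ tIdx m b n),
        if_pos (⟨hj1, by omega⟩ : 1 ≤ j ∧ j ≤ tIdx m b n)]
      have e1 : tIdx m b n + 1 - (j+1) = tIdx m b n - j := by omega
      have e2 : tIdx m b n + 1 - j = (tIdx m b n - j) + 1 := by omega
      rw [e1, e2]
      exact LOPaux.part_ii hm hinc (by omega) (by omega)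
  · rintro ⟨hsing, hpos⟩
    rcases Nat.eq_zero_or_pos n with hn0 | hn
    · subst hn0
      have ht0 : tIdx m b 0 = 0 := by simp [tIdx]
      refine ⟨?_, ?_⟩
      · rw [ht0]; simp [tIdx]
      · intro j hj1 hj0; omega
    · have ht1 : 1 ≤ tIdx m b n := LOPaux.tIdx_ge_one hm hn (hpos n hn le_rfl)
      have hval : ∀ k, 1 ≤ k → k ≤ n →
          lvlCount m (lOp m b n) (tIdx m b n) k = b (n+1-k) := by
        intro k hk hkn
        rw [LOPaux.lvl_lOp_sum m b n k]
        exact LOPaux.lvl_lOp_eq hm hmono hsing hk hkn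
      have hzero : ∀ k, n < k → lvlCount m (lOp m b n) (tIdx m b n) k = 0 := by
        intro k hk
        rw [LOPaux.lvl_lOp_sum m b n k]
        apply Finset.sum_eq_zero
        intro i hi
        obtain ⟨hi1, _⟩ := Finset.mem_Icc.1 hi
        have hle := LOPaux.lvl_le_nm (m := m) (b := b) (n := n) hi1
        have h2 : n*m ≤ (k-1)*m := Nat.mul_le_mul_right m (by omega)
        have h3 := LOPaux.imul (i := k) m (by omega)
        omega
      have htt : tIdx m (lOp m b n) (tIdx m b n) = n := by
        apply le_antisymm
        · rw [tIdx]
          apply Finset.sup_le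
          intro k _
          by_cases h : lvlCount m (lOp m b n) (tIdx m b n) k ≠ 0
          · rw [if_pos h]
            by_contra hc
            exact h (hzero k (by omega))
          · rw [if_neg h]; omega
        · have hM : n ≤ (Finset.Icc 1 (tIdx m b n)).sup (lOp m b n) := by
            have h1 := Finset.le_sup (f := lOp m b n)
              (Finset.mem_Icc.2 ⟨ht1, le_rfl⟩ :
                tIdx m b n ∈ Finset.Icc 1 (tIdx m b n))
            have h2 : lOp m b n (tIdx m b n) = lvlCount m b n 1 := by
              rw [lOp, if_pos ⟨ht1, le_rfl⟩]
              congr 1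
              omega
            have h3 := LOPaux.lvl_one_ge (m := m) (b := b) (n := n) hm hpos
            omega
          have hmem : n ∈ Finset.Icc 1 ((Finset.Icc 1 (tIdx m b n)).sup (lOp m b n)) :=
            Finset.mem_Icc.2 ⟨hn, hM⟩
          have h4 := Finset.le_sup
            (f := fun i => if lvlCount m (lOp m b n) (tIdx m b n) i ≠ 0 then i else 0) hmem
          have h5 : lvlCount m (lOp m b n) (tIdx m b n) n ≠ 0 := by
            rw [hval n hn le_rfl]
            have e : n+1-n = 1 := by omega
            rw [e]
            have := hpos 1 le_rfl hn
            omega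
          have h6 : (fun i => if lvlCount m (lOp m b n) (tIdx m b n) i ≠ 0 then i else 0) n
              = n := by simp [h5]
          rw [if_pos h5] at h4
          rw [tIdx]
          exact h4
      refine ⟨htt, ?_⟩
      intro j hj1 hjn
      rw [lOp, htt, if_pos ⟨hj1, hjn⟩]
      rw [hval (n+1-j) (by omega) (by omega)]
      congr 1
      omega
end

section
/- Let π = a_1...a_n be a sequence of real numbers with a_i > a_{i+1} for some i, and let π̄ be π with a_i and a_{i+1} swapped. Set d = a_i − a_{i+1} > 0. Then dinv_m(π̄) ≤ dinv_m(π); moreover if 0 < d ≤ m then dinv_m(π) − dinv_m(π̄) = 1, and if d > m then dinv_m(π) = dinv_m(π̄). -/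
open scoped Classical

noncomputable def dinvm (m n : ℕ) (a : ℕ → ℝ) : ℕ :=
  ∑ k ∈ Finset.range m,
    (((Finset.range n) ×ˢ (Finset.range n)).filter
      (fun p => p.1 < p.2 ∧ 0 ≤ a p.1 - a p.2 + k ∧ a p.1 - a p.2 + k ≤ m)).card

noncomputable def Sset (m n : ℕ) (b : ℕ → ℝ) (k : ℕ) : Finset (ℕ × ℕ) :=
  ((Finset.range n) ×ˢ (Finset.range n)).filter
      (fun p => p.1 < p.2 ∧ 0 ≤ b p.1 - b p.2 + k ∧ b p.1 - b p.2 + k ≤ m)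

lemma dinvm_eq (m n : ℕ) (b : ℕ → ℝ) :
    dinvm m n b = ∑ k ∈ Finset.range m, (Sset m n b k).card := rfl

lemma swap_lt {i x y : ℕ} (hxy : x < y) (hne : ¬(x = i ∧ y = i + 1)) :
    Equiv.swap i (i+1) x < Equiv.swap i (i+1) y := by
  simp only [Equiv.swap_apply_def]
  split_ifs <;> omega

lemma swap_lt_n {i x n : ℕ} (hx : x < n) (hi : i + 1 < n) :
    Equiv.swap i (i+1) x < n := by
  simp only [Equiv.swap_apply_def]
  split_ifs <;> omega

lemma swap_mem_erase {m n i k : ℕ} {b : ℕ → ℝ} (hi : i + 1 < n) {p : ℕ × ℕ}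
    (hp : p ∈ (Sset m n (fun j => b (Equiv.swap i (i+1) j)) k).erase (i, i+1)) :
    (Equiv.swap i (i+1) p.1, Equiv.swap i (i+1) p.2) ∈ (Sset m n b k).erase (i, i+1) := by
  simp only [Finset.mem_erase, Sset, Finset.mem_filter, Finset.mem_product,
    Finset.mem_range] at hp ⊢
  obtain ⟨hne, ⟨h1, h2⟩, hlt, hv1, hv2⟩ := hp
  have hne' : ¬(p.1 = i ∧ p.2 = i + 1) := by
    rintro ⟨e1, e2⟩
    exact hne (Prod.ext e1 e2)
  refine ⟨?_, ⟨swap_lt_n h1 hi, swap_lt_n h2 hi⟩, swap_lt hlt hne', hv1, hv2⟩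
  intro h
  have e1 : Equiv.swap i (i+1) p.1 = i := congrArg Prod.fst h
  have e2 : Equiv.swap i (i+1) p.2 = i + 1 := congrArg Prod.snd h
  have f1 : p.1 = i + 1 := by
    have := congrArg (Equiv.swap i (i+1)) e1
    simpa using this
  have f2 : p.2 = i := by
    have := congrArg (Equiv.swap i (i+1)) e2
    simpa using this
  omega

lemma erase_card_eq (m n i k : ℕ) (b : ℕ → ℝ) (hi : i + 1 < n) :
    ((Sset m n (fun j => b (Equiv.swap i (i+1) j)) k).erase (i, i+1)).card
      = ((Sset m n b k).erase (i, i+1)).card := by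
  have hback : ∀ p ∈ (Sset m n b k).erase (i, i+1),
      (Equiv.swap i (i+1) p.1, Equiv.swap i (i+1) p.2)
        ∈ (Sset m n (fun j => b (Equiv.swap i (i+1) j)) k).erase (i, i+1) := by
    intro p hp
    have : Sset m n b k = Sset m n (fun j =>
        (fun j' => b (Equiv.swap i (i+1) j')) (Equiv.swap i (i+1) j)) k := by
      simp [Sset]
    rw [this] at hp
    exact swap_mem_erase hi hp
  apply Finset.card_bij' (fun p _ => (Equiv.swap i (i+1) p.1, Equiv.swap i (i+1) p.2))
    (fun p _ => (Equiv.swap i (i+1) p.1, Equiv.swap i (i+1) p.2))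
    (fun p hp => swap_mem_erase hi hp) (fun p hp => hback p hp)
  · intro p _; simp
  · intro p _; simp

/-- Swapping an adjacent descent weakly decreases `dinv_m`: if `a_i > a_{i+1}` and
`π̄` is `π` with positions `i, i+1` swapped, then `dinv_m(π̄) ≤ dinv_m(π)`; if
`0 < d = a_i − a_{i+1} ≤ m` then `dinv_m(π) − dinv_m(π̄) = 1`, and if `d > m` then
`dinv_m(π) = dinv_m(π̄)`. -/
theorem dinv_adjacent_swap (m n i : ℕ) (hm : 0 < m) (a : ℕ → ℝ)
    (hi : i + 1 < n) (hdesc : a (i + 1) < a i)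
    (abar : ℕ → ℝ)
    (habar : abar = fun j => if j = i then a (i + 1) else if j = i + 1 then a i else a j) :
    dinvm m n abar ≤ dinvm m n a ∧
    (a i - a (i + 1) ≤ (m : ℝ) → dinvm m n a = dinvm m n abar + 1) ∧
    ((m : ℝ) < a i - a (i + 1) → dinvm m n a = dinvm m n abar) := by
  set d : ℝ := a i - a (i + 1) with hd_def
  have hd : 0 < d := by simp [hd_def]; linarith
  have habar' : abar = fun j => a (Equiv.swap i (i+1) j) := by
    rw [habar]; funext j
    simp only [Equiv.swap_apply_def]
    split_ifs <;> rfl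
  -- memberships of the special pair
  have hmemA : ∀ k, (i, i+1) ∈ Sset m n a k ↔ d + k ≤ (m : ℝ) := by
    intro k
    simp only [Sset, Finset.mem_filter, Finset.mem_product, Finset.mem_range]
    constructor
    · rintro ⟨-, -, -, h⟩; linarith [h]
    · intro h
      refine ⟨⟨by omega, hi⟩, by omega, by positivity, by linarith⟩
  have hmemB : ∀ k, k < m → ((i, i+1) ∈ Sset m n abar k ↔ d ≤ (k : ℝ)) := by
    intro k hk
    have hab1 : abar i = a (i+1) := by rw [habar]; simp
    have hab2 : abar (i+1) = a i := by rw [habar]; simp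
    have hkm : (k : ℝ) < m := by exact_mod_cast hk
    simp only [Sset, Finset.mem_filter, Finset.mem_product, Finset.mem_range, hab1, hab2]
    constructor
    · rintro ⟨-, -, h, -⟩; linarith
    · intro h
      refine ⟨⟨by omega, hi⟩, by omega, by linarith, by linarith⟩
  -- per-k key identity
  have hkey : ∀ k, (Sset m n a k).card
        + (if (i, i+1) ∈ Sset m n abar k then 1 else 0)
      = (Sset m n abar k).card + (if (i, i+1) ∈ Sset m n a k then 1 else 0) := by
    intro k
    have he : ((Sset m n abar k).erase (i, i+1)).card
        = ((Sset m n a k).erase (i, i+1)).card := by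
      rw [habar']; exact erase_card_eq m n i k a hi
    have c1 : ∀ (b : ℕ → ℝ), (Sset m n b k).card
        = ((Sset m n b k).erase (i, i+1)).card
          + (if (i, i+1) ∈ Sset m n b k then 1 else 0) := by
      intro b
      by_cases h : (i, i+1) ∈ Sset m n b k
      · rw [if_pos h, ← Finset.card_erase_add_one h]
      · rw [if_neg h, Finset.erase_eq_of_notMem h, add_zero]
    rw [c1 a, c1 abar, he]; ring
  have hsum : dinvm m n a + ∑ k ∈ Finset.range m,
        (if (i, i+1) ∈ Sset m n abar k then 1 else 0)
      = dinvm m n abar + ∑ k ∈ Finset.range m,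
        (if (i, i+1) ∈ Sset m n a k then 1 else 0) := by
    rw [dinvm_eq, dinvm_eq, ← Finset.sum_add_distrib, ← Finset.sum_add_distrib]
    exact Finset.sum_congr rfl fun k _ => hkey k
  have hA : ∑ k ∈ Finset.range m, (if (i, i+1) ∈ Sset m n a k then 1 else 0)
      = ((Finset.range m).filter (fun k : ℕ => d + (k:ℝ) ≤ (m : ℝ))).card := by
    rw [Finset.card_filter]
    exact Finset.sum_congr rfl fun k _ => by simp only [hmemA k]
  have hB : ∑ k ∈ Finset.range m, (if (i, i+1) ∈ Sset m n abar k then 1 else 0)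
      = ((Finset.range m).filter (fun k : ℕ => d ≤ (k : ℝ))).card := by
    rw [Finset.card_filter]
    refine Finset.sum_congr rfl fun k hk => ?_
    simp only [hmemB k (Finset.mem_range.mp hk)]
  rw [hA, hB] at hsum
  -- counting
  by_cases hdm : d ≤ (m : ℝ)
  · set t : ℕ := ⌈d⌉₊ with ht_def
    have ht1 : 1 ≤ t := Nat.ceil_pos.mpr hd
    have htm : t ≤ m := Nat.ceil_le.mpr hdm
    have hAcard : ((Finset.range m).filter (fun k : ℕ => d + (k:ℝ) ≤ (m : ℝ))).card
        = m - t + 1 := by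
      have : (Finset.range m).filter (fun k : ℕ => d + (k:ℝ) ≤ (m : ℝ))
          = Finset.range (m - t + 1) := by
        ext k
        simp only [Finset.mem_filter, Finset.mem_range]
        constructor
        · rintro ⟨hkm, hk⟩
          have hle : d ≤ ((m - k : ℕ) : ℝ) := by
            rw [Nat.cast_sub hkm.le]
            linarith
          have : t ≤ m - k := Nat.ceil_le.mpr hle
          omega
        · intro hk
          have hkt : k + t ≤ m := by omega
          have : (k : ℝ) + t ≤ m := by exact_mod_cast hkt
          have hdt : d ≤ (t : ℝ) := Nat.le_ceil d
          exact ⟨by omega, by linarith⟩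
      rw [this, Finset.card_range]
    have hBcard : ((Finset.range m).filter (fun k : ℕ => d ≤ (k : ℝ))).card = m - t := by
      have : (Finset.range m).filter (fun k : ℕ => d ≤ (k : ℝ)) = Finset.Ico t m := by
        ext k
        simp only [Finset.mem_filter, Finset.mem_range, Finset.mem_Ico]
        constructor
        · rintro ⟨hkm, hk⟩
          exact ⟨Nat.ceil_le.mpr hk, hkm⟩
        · rintro ⟨h1, h2⟩
          exact ⟨h2, by rw [← Nat.ceil_le]; exact h1⟩
      rw [this, Nat.card_Ico]
    rw [hAcard, hBcard] at hsum
    have heq : dinvm m n a = dinvm m n abar + 1 := by omega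
    exact ⟨by omega, fun _ => heq, fun h => absurd hdm (not_le.mpr h)⟩
  · push_neg at hdm
    have hAcard : ((Finset.range m).filter (fun k : ℕ => d + (k:ℝ) ≤ (m : ℝ))).card = 0 := by
      rw [Finset.card_eq_zero, Finset.filter_eq_empty_iff]
      intro k _
      have : (0 : ℝ) ≤ k := by positivity
      push_neg
      linarith
    have hBcard : ((Finset.range m).filter (fun k : ℕ => d ≤ (k : ℝ))).card = 0 := by
      rw [Finset.card_eq_zero, Finset.filter_eq_empty_iff]
      intro k hk
      have : (k : ℝ) < m := by exact_mod_cast Finset.mem_range.mp hk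
      push_neg
      linarith
    rw [hAcard, hBcard] at hsum
    have heq : dinvm m n a = dinvm m n abar := by omega
    exact ⟨heq.ge, fun h => absurd h (not_le.mpr hdm), fun _ => heq⟩
end
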